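/- arXiv:2404.01608 — 6 statements merged into one kernel-verified Lean document; each statement's English description precedes it below -/
import Mathlib

section
/- Assume the diversity condition and I* ≠ ∅. Then the set of FAIRM solutions equals the set of full-information FAIRM solutions; in particular, for every FAIRM solution (w^F, Φ^F), every full-information FAIRM solution (w*, Φ*), and every e ∈ E, R^e(w^F∘Φ^F) = R^e(w*∘Φ*). -/
open MeasureTheory

noncomputable section

/-- `E[u(Φ(x^e)) * y^e]`, the covariance-type moment in environment `e`. -/
def covT {p q : ℕ} {E : Type} (P : E → Measure ((Fin p → ℝ) × ℝ))
    (Φ : (Fin p → ℝ) → (Fin q → ℝ)) (u : (Fin q → ℝ) → ℝ) (e : E) : ℝ :=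
  ∫ z, u (Φ z.1) * z.2 ∂(P e)

/-- `E[(u(Φ(x^e)))²]`, the second-moment term in environment `e`. -/
def sqT {p q : ℕ} {E : Type} (P : E → Measure ((Fin p → ℝ) × ℝ))
    (Φ : (Fin p → ℝ) → (Fin q → ℝ)) (u : (Fin q → ℝ) → ℝ) (e : E) : ℝ :=
  ∫ z, (u (Φ z.1)) ^ 2 ∂(P e)

/-- The risk `R^e(f) = E[(y^e - f(x^e))²]`. -/
def risk {p : ℕ} {E : Type} (P : E → Measure ((Fin p → ℝ) × ℝ))
    (f : (Fin p → ℝ) → ℝ) (e : E) : ℝ :=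
  ∫ z, (z.2 - f z.1) ^ 2 ∂(P e)

/-- The set `I*` of invariant representations. -/
def InvSet {p q : ℕ} {E : Type} (P : E → Measure ((Fin p → ℝ) × ℝ))
    (FΦ : Set ((Fin p → ℝ) → (Fin q → ℝ))) (Fw : Set ((Fin q → ℝ) → ℝ)) :
    Set ((Fin p → ℝ) → (Fin q → ℝ)) :=
  {Φ | Φ ∈ FΦ ∧ ∀ u ∈ Fw, ∀ e e' : E,
    covT P Φ u e = covT P Φ u e' ∧ sqT P Φ u e = sqT P Φ u e'}

/-- The training-feasible set `I_tr`. -/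
def TrFeas {p q : ℕ} {E : Type} (P : E → Measure ((Fin p → ℝ) × ℝ)) (Etr : Finset E)
    (FΦ : Set ((Fin p → ℝ) → (Fin q → ℝ))) (Fw : Set ((Fin q → ℝ) → ℝ)) :
    Set ((Fin p → ℝ) → (Fin q → ℝ)) :=
  {Φ | Φ ∈ FΦ ∧ ∀ u ∈ Fw, ∀ e ∈ Etr, ∀ e' ∈ Etr,
    covT P Φ u e = covT P Φ u e' ∧ sqT P Φ u e = sqT P Φ u e'}

/-- Diversity condition on the training environments. -/
def Diversity {p q : ℕ} {E : Type} (P : E → Measure ((Fin p → ℝ) × ℝ)) (Etr : Finset E)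
    (FΦ : Set ((Fin p → ℝ) → (Fin q → ℝ))) (Fw : Set ((Fin q → ℝ) → ℝ)) : Prop :=
  ∀ Φ ∈ FΦ, Φ ∉ InvSet P FΦ Fw → ∃ u ∈ Fw, ∃ e ∈ Etr, ∃ e' ∈ Etr,
    covT P Φ u e ≠ covT P Φ u e' ∨ sqT P Φ u e ≠ sqT P Φ u e'

/-- Regularity: measurability and finiteness of all relevant expectations. -/
def Regular {p q : ℕ} {E : Type} (P : E → Measure ((Fin p → ℝ) × ℝ))
    (FΦ : Set ((Fin p → ℝ) → (Fin q → ℝ))) (Fw : Set ((Fin q → ℝ) → ℝ)) : Prop :=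
  (∀ Φ ∈ FΦ, Measurable Φ) ∧ (∀ w ∈ Fw, Measurable w) ∧
  (∀ e : E, MemLp (fun z : (Fin p → ℝ) × ℝ => z.2) 2 (P e)) ∧
  (∀ (e : E) (j : Fin p), MemLp (fun z : (Fin p → ℝ) × ℝ => z.1 j) 2 (P e)) ∧
  (∀ Φ ∈ FΦ, ∀ u ∈ Fw, ∀ e : E,
    Integrable (fun z : (Fin p → ℝ) × ℝ => u (Φ z.1) * z.2) (P e) ∧
    Integrable (fun z : (Fin p → ℝ) × ℝ => (u (Φ z.1)) ^ 2) (P e) ∧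
    Integrable (fun z : (Fin p → ℝ) × ℝ => (z.2 - u (Φ z.1)) ^ 2) (P e))

/-- A FAIRM solution: minimizer of the weighted training risk over `F_w × I_tr`. -/
def IsFairmSol {p q : ℕ} {E : Type} (P : E → Measure ((Fin p → ℝ) × ℝ)) (Etr : Finset E)
    (FΦ : Set ((Fin p → ℝ) → (Fin q → ℝ))) (Fw : Set ((Fin q → ℝ) → ℝ)) (α : E → ℝ)
    (w : (Fin q → ℝ) → ℝ) (Φ : (Fin p → ℝ) → (Fin q → ℝ)) : Prop :=
  w ∈ Fw ∧ Φ ∈ TrFeas P Etr FΦ Fw ∧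
  ∀ w' ∈ Fw, ∀ Φ' ∈ TrFeas P Etr FΦ Fw,
    ∑ e ∈ Etr, α e * risk P (fun x => w (Φ x)) e ≤
      ∑ e ∈ Etr, α e * risk P (fun x => w' (Φ' x)) e

/-- A full-information FAIRM solution: minimizer of the weighted risk over `F_w × I*`. -/
def IsFullSol {p q : ℕ} {E : Type} [Fintype E] (P : E → Measure ((Fin p → ℝ) × ℝ))
    (FΦ : Set ((Fin p → ℝ) → (Fin q → ℝ))) (Fw : Set ((Fin q → ℝ) → ℝ)) (αs : E → ℝ)
    (w : (Fin q → ℝ) → ℝ) (Φ : (Fin p → ℝ) → (Fin q → ℝ)) : Prop :=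
  w ∈ Fw ∧ Φ ∈ InvSet P FΦ Fw ∧
  ∀ w' ∈ Fw, ∀ Φ' ∈ InvSet P FΦ Fw,
    ∑ e : E, αs e * risk P (fun x => w (Φ x)) e ≤
      ∑ e : E, αs e * risk P (fun x => w' (Φ' x)) e


/-- Risk decomposition: `R^e(u∘Φ) = E[y²] - 2 covT + sqT`. -/
lemma risk_decomp {p q : ℕ} {E : Type} (P : E → Measure ((Fin p → ℝ) × ℝ))
    (FΦ : Set ((Fin p → ℝ) → (Fin q → ℝ))) (Fw : Set ((Fin q → ℝ) → ℝ))
    (hreg : Regular P FΦ Fw)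
    {Φ : (Fin p → ℝ) → (Fin q → ℝ)} (hΦ : Φ ∈ FΦ)
    {u : (Fin q → ℝ) → ℝ} (hu : u ∈ Fw) (e : E) :
    risk P (fun x => u (Φ x)) e =
      (∫ z : (Fin p → ℝ) × ℝ, z.2 ^ 2 ∂(P e)) - 2 * covT P Φ u e + sqT P Φ u e := by
  obtain ⟨hcov, hsq, hr⟩ := hreg.2.2.2.2 Φ hΦ u hu e
  have hy2 : Integrable (fun z : (Fin p → ℝ) × ℝ => z.2 ^ 2) (P e) :=
    (hreg.2.2.1 e).integrable_sq
  have h1 : risk P (fun x => u (Φ x)) e =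
      ∫ z : (Fin p → ℝ) × ℝ,
        (z.2 ^ 2 - 2 * (u (Φ z.1) * z.2) + (u (Φ z.1)) ^ 2) ∂(P e) := by
    unfold risk
    congr 1
    funext z
    ring
  have hsub : Integrable (fun z : (Fin p → ℝ) × ℝ =>
      z.2 ^ 2 - 2 * (u (Φ z.1) * z.2)) (P e) := hy2.sub (hcov.const_mul 2)
  have hA : (∫ z : (Fin p → ℝ) × ℝ,
        (z.2 ^ 2 - 2 * (u (Φ z.1) * z.2) + (u (Φ z.1)) ^ 2) ∂(P e))
      = (∫ z : (Fin p → ℝ) × ℝ, (z.2 ^ 2 - 2 * (u (Φ z.1) * z.2)) ∂(P e))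
        + ∫ z : (Fin p → ℝ) × ℝ, (u (Φ z.1)) ^ 2 ∂(P e) := integral_add hsub hsq
  have hB : (∫ z : (Fin p → ℝ) × ℝ, (z.2 ^ 2 - 2 * (u (Φ z.1) * z.2)) ∂(P e))
      = (∫ z : (Fin p → ℝ) × ℝ, z.2 ^ 2 ∂(P e))
        - ∫ z : (Fin p → ℝ) × ℝ, 2 * (u (Φ z.1) * z.2) ∂(P e) :=
    integral_sub hy2 (hcov.const_mul 2)
  rw [h1, hA, hB, integral_const_mul]
  rfl

/-- Under the diversity condition, if `I* ≠ ∅`, the set of FAIRM solutions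
equals the set of full-information FAIRM solutions, and all of them have identical risks
in every environment. -/
theorem stmt1 {p q : ℕ} {E : Type} [Fintype E] [Nonempty E]
    (Etr : Finset E) (hEtr : Etr.Nonempty)
    (P : E → Measure ((Fin p → ℝ) × ℝ)) [∀ e, IsProbabilityMeasure (P e)]
    (FΦ : Set ((Fin p → ℝ) → (Fin q → ℝ))) (Fw : Set ((Fin q → ℝ) → ℝ))
    (hreg : Regular P FΦ Fw)
    (αs : E → ℝ) (hαs : ∀ e, 0 < αs e) (hαssum : ∑ e : E, αs e = 1)
    (α : E → ℝ) (hα : ∀ e ∈ Etr, 0 < α e) (hαsum : ∑ e ∈ Etr, α e = 1)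
    (hdiv : Diversity P Etr FΦ Fw)
    (hne : (InvSet P FΦ Fw).Nonempty) :
    ({wΦ | IsFairmSol P Etr FΦ Fw α wΦ.1 wΦ.2} :
        Set (((Fin q → ℝ) → ℝ) × ((Fin p → ℝ) → (Fin q → ℝ)))) =
      {wΦ | IsFullSol P FΦ Fw αs wΦ.1 wΦ.2} ∧
    ∀ wF ΦF wS ΦS, IsFairmSol P Etr FΦ Fw α wF ΦF → IsFullSol P FΦ Fw αs wS ΦS →
      ∀ e : E, risk P (fun x => wF (ΦF x)) e = risk P (fun x => wS (ΦS x)) e := by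
  classical
  obtain ⟨e0, he0⟩ := hEtr
  -- TrFeas = InvSet under diversity
  have hfeas : TrFeas P Etr FΦ Fw = InvSet P FΦ Fw := by
    apply Set.Subset.antisymm
    · intro Φ hΦ
      by_contra hnot
      obtain ⟨u, hu, e, he, e', he', hne'⟩ := hdiv Φ hΦ.1 hnot
      rcases hne' with h | h
      · exact h (hΦ.2 u hu e he e' he').1
      · exact h (hΦ.2 u hu e he e' he').2
    · intro Φ hΦ
      exact ⟨hΦ.1, fun u hu e _ e' _ => hΦ.2 u hu e e'⟩
  set Y : E → ℝ := fun e => ∫ z : (Fin p → ℝ) × ℝ, z.2 ^ 2 ∂(P e) with hY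
  set J : ((Fin q → ℝ) → ℝ) → ((Fin p → ℝ) → (Fin q → ℝ)) → ℝ :=
    fun w Φ => -(2 * covT P Φ w e0) + sqT P Φ w e0 with hJ
  -- training objective for invariant Φ
  have htr : ∀ w ∈ Fw, ∀ Φ ∈ InvSet P FΦ Fw,
      ∑ e ∈ Etr, α e * risk P (fun x => w (Φ x)) e = (∑ e ∈ Etr, α e * Y e) + J w Φ := by
    intro w hw Φ hΦ
    have : ∀ e ∈ Etr, α e * risk P (fun x => w (Φ x)) e = α e * Y e + α e * J w Φ := by
      intro e _
      rw [risk_decomp P FΦ Fw hreg hΦ.1 hw e, (hΦ.2 w hw e e0).1, (hΦ.2 w hw e e0).2]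
      ring
    rw [Finset.sum_congr rfl this, Finset.sum_add_distrib, ← Finset.sum_mul, hαsum, one_mul]
  -- full objective for invariant Φ
  have hfull : ∀ w ∈ Fw, ∀ Φ ∈ InvSet P FΦ Fw,
      ∑ e : E, αs e * risk P (fun x => w (Φ x)) e = (∑ e : E, αs e * Y e) + J w Φ := by
    intro w hw Φ hΦ
    have : ∀ e ∈ Finset.univ, αs e * risk P (fun x => w (Φ x)) e
        = αs e * Y e + αs e * J w Φ := by
      intro e _
      rw [risk_decomp P FΦ Fw hreg hΦ.1 hw e, (hΦ.2 w hw e e0).1, (hΦ.2 w hw e e0).2]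
      ring
    rw [Finset.sum_congr rfl this, Finset.sum_add_distrib, ← Finset.sum_mul, hαssum, one_mul]
  -- both solution concepts are equivalent to minimizing J over Fw × InvSet
  have hfairm_iff : ∀ w Φ, IsFairmSol P Etr FΦ Fw α w Φ ↔
      (w ∈ Fw ∧ Φ ∈ InvSet P FΦ Fw ∧
        ∀ w' ∈ Fw, ∀ Φ' ∈ InvSet P FΦ Fw, J w Φ ≤ J w' Φ') := by
    intro w Φ
    unfold IsFairmSol
    rw [hfeas]
    constructor
    · rintro ⟨hw, hΦ, hmin⟩
      refine ⟨hw, hΦ, fun w' hw' Φ' hΦ' => ?_⟩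
      have := hmin w' hw' Φ' hΦ'
      rw [htr w hw Φ hΦ, htr w' hw' Φ' hΦ'] at this
      linarith
    · rintro ⟨hw, hΦ, hmin⟩
      refine ⟨hw, hΦ, fun w' hw' Φ' hΦ' => ?_⟩
      rw [htr w hw Φ hΦ, htr w' hw' Φ' hΦ']
      linarith [hmin w' hw' Φ' hΦ']
  have hfull_iff : ∀ w Φ, IsFullSol P FΦ Fw αs w Φ ↔
      (w ∈ Fw ∧ Φ ∈ InvSet P FΦ Fw ∧
        ∀ w' ∈ Fw, ∀ Φ' ∈ InvSet P FΦ Fw, J w Φ ≤ J w' Φ') := by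
    intro w Φ
    unfold IsFullSol
    constructor
    · rintro ⟨hw, hΦ, hmin⟩
      refine ⟨hw, hΦ, fun w' hw' Φ' hΦ' => ?_⟩
      have := hmin w' hw' Φ' hΦ'
      rw [hfull w hw Φ hΦ, hfull w' hw' Φ' hΦ'] at this
      linarith
    · rintro ⟨hw, hΦ, hmin⟩
      refine ⟨hw, hΦ, fun w' hw' Φ' hΦ' => ?_⟩
      rw [hfull w hw Φ hΦ, hfull w' hw' Φ' hΦ']
      linarith [hmin w' hw' Φ' hΦ']
  constructor
  · ext wΦ
    simp only [Set.mem_setOf_eq]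
    rw [hfairm_iff, hfull_iff]
  · intro wF ΦF wS ΦS hF hS e
    rw [hfairm_iff] at hF
    rw [hfull_iff] at hS
    have hJeq : J wF ΦF = J wS ΦS :=
      le_antisymm (hF.2.2 wS hS.1 ΦS hS.2.1) (hS.2.2 wF hF.1 ΦF hF.2.1)
    have h1 := risk_decomp P FΦ Fw hreg hF.2.1.1 hF.1 e
    have h2 := risk_decomp P FΦ Fw hreg hS.2.1.1 hS.1 e
    rw [h1, h2, (hF.2.1.2 wF hF.1 e e0).1, (hF.2.1.2 wF hF.1 e e0).2,
      (hS.2.1.2 wS hS.1 e e0).1, (hS.2.1.2 wS hS.1 e e0).2]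
    have : -(2 * covT P ΦF wF e0) + sqT P ΦF wF e0
        = -(2 * covT P ΦS wS e0) + sqT P ΦS wS e0 := hJeq
    linarith
end
end

section
/- Assume I* ≠ ∅ and conditional-mean realizability. Then for every full-information FAIRM solution (w*, Φ*) and every e ∈ E, E[y^e | σ(w*(Φ*(x^e)))] = w*(Φ*(x^e)) P^e-almost surely; that is, the full-information FAIRM prediction rule is perfectly multi-calibrated over E. -/
open MeasureTheory

noncomputable section

/-- The σ-algebra generated by a random variable `Z` on `(Fin p → ℝ) × ℝ`. -/
def sigmaGen {p : ℕ} {β : Type*} [MeasurableSpace β] (Z : (Fin p → ℝ) × ℝ → β) :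
    MeasurableSpace ((Fin p → ℝ) × ℝ) :=
  MeasurableSpace.comap Z inferInstance

/-- Conditional-mean realizability: every invariant representation admits a
conditional-mean function in `F_w`, uniformly over environments. -/
def CMR {p q : ℕ} {E : Type} (P : E → Measure ((Fin p → ℝ) × ℝ))
    (FΦ : Set ((Fin p → ℝ) → (Fin q → ℝ))) (Fw : Set ((Fin q → ℝ) → ℝ)) : Prop :=
  ∀ Φ ∈ InvSet P FΦ Fw, ∃ w ∈ Fw, ∀ e : E,
    (P e)[(fun z : (Fin p → ℝ) × ℝ => z.2) | sigmaGen (fun z => Φ z.1)]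
      =ᵐ[P e] fun z => w (Φ z.1)

lemma myIntMul {α : Type*} [MeasurableSpace α] {μ : Measure α}
    {f g : α → ℝ} (hf : AEStronglyMeasurable f μ) (hg : AEStronglyMeasurable g μ)
    (hf2 : Integrable (fun x => f x ^ 2) μ) (hg2 : Integrable (fun x => g x ^ 2) μ) :
    Integrable (fun x => f x * g x) μ := by
  refine ((hf2.add hg2).div_const 2).mono' (hf.mul hg) ?_
  filter_upwards with x
  rw [Real.norm_eq_abs, abs_mul]
  show |f x| * |g x| ≤ (f x ^ 2 + g x ^ 2) / 2
  nlinarith [sq_nonneg (|f x| - |g x|), sq_abs (f x), sq_abs (g x),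
    abs_nonneg (f x), abs_nonneg (g x)]

/-- Under `I* ≠ ∅` and conditional-mean realizability, every
full-information FAIRM solution is perfectly multi-calibrated over `E`:
`E[y^e | σ(w*(Φ*(x^e)))] = w*(Φ*(x^e))` a.s. for every `e`. -/
theorem stmt4 {p q : ℕ} {E : Type} [Fintype E] [Nonempty E]
    (P : E → Measure ((Fin p → ℝ) × ℝ)) [∀ e, IsProbabilityMeasure (P e)]
    (FΦ : Set ((Fin p → ℝ) → (Fin q → ℝ))) (Fw : Set ((Fin q → ℝ) → ℝ))
    (hreg : Regular P FΦ Fw)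
    (αs : E → ℝ) (hαs : ∀ e, 0 < αs e) (hαssum : ∑ e : E, αs e = 1)
    (hne : (InvSet P FΦ Fw).Nonempty)
    (hcmr : CMR P FΦ Fw)
    (wstar : (Fin q → ℝ) → ℝ) (Φstar : (Fin p → ℝ) → (Fin q → ℝ))
    (hsol : IsFullSol P FΦ Fw αs wstar Φstar) :
    ∀ e : E,
      (P e)[(fun z : (Fin p → ℝ) × ℝ => z.2) |
          sigmaGen (fun z => wstar (Φstar z.1))]
        =ᵐ[P e] fun z => wstar (Φstar z.1) := by
  obtain ⟨hw, hΦ, hmin⟩ := hsol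
  obtain ⟨hmeasΦ, hmeasw, hY2, -, hint⟩ := hreg
  obtain ⟨w₀, hw₀, hw₀cond⟩ := hcmr Φstar hΦ
  have hΦF : Φstar ∈ FΦ := hΦ.1
  have hmΦ : Measurable Φstar := hmeasΦ _ hΦF
  have hmw : Measurable wstar := hmeasw _ hw
  have hmw₀ : Measurable w₀ := hmeasw _ hw₀
  set Y : (Fin p → ℝ) × ℝ → ℝ := fun z => z.2 with hY_def
  set F : (Fin p → ℝ) × ℝ → ℝ := fun z => wstar (Φstar z.1) with hF_def
  set G : (Fin p → ℝ) × ℝ → ℝ := fun z => w₀ (Φstar z.1) with hG_def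
  set Z : (Fin p → ℝ) × ℝ → (Fin q → ℝ) := fun z => Φstar z.1 with hZ_def
  have hmZ : Measurable Z := hmΦ.comp measurable_fst
  have hmF : Measurable F := hmw.comp hmZ
  have hmG : Measurable G := hmw₀.comp hmZ
  have hm : sigmaGen Z ≤ (inferInstance : MeasurableSpace ((Fin p → ℝ) × ℝ)) :=
    measurable_iff_comap_le.mp hmZ
  have hm' : sigmaGen F ≤ (inferInstance : MeasurableSpace ((Fin p → ℝ) × ℝ)) :=
    measurable_iff_comap_le.mp hmF
  have hm'm : sigmaGen F ≤ sigmaGen Z := by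
    rw [sigmaGen, sigmaGen,
      show F = wstar ∘ Z from rfl, ← MeasurableSpace.comap_comp]
    exact MeasurableSpace.comap_mono (measurable_iff_comap_le.mp hmw)
  have hZm : Measurable[sigmaGen Z] Z := by
    rw [sigmaGen]; exact measurable_iff_comap_le.mpr le_rfl
  have hFm : StronglyMeasurable[sigmaGen Z] F := (hmw.comp hZm).stronglyMeasurable
  have hGm : StronglyMeasurable[sigmaGen Z] G := (hmw₀.comp hZm).stronglyMeasurable
  have hFm' : StronglyMeasurable[sigmaGen F] F := by
    have : Measurable[sigmaGen F] F := by
      rw [sigmaGen]; exact measurable_iff_comap_le.mpr le_rfl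
    exact this.stronglyMeasurable
  -- integrability facts per environment
  have hintF := fun e => hint Φstar hΦF wstar hw e
  have hintG := fun e => hint Φstar hΦF w₀ hw₀ e
  have hYsq : ∀ e, Integrable (fun z => Y z ^ 2) (P e) := fun e => (hY2 e).integrable_sq
  have hYint : ∀ e, Integrable Y (P e) := fun e => (hY2 e).integrable one_le_two
  have hF2 : ∀ e, Integrable (fun z => F z ^ 2) (P e) := fun e => (hintF e).2.1
  have hG2 : ∀ e, Integrable (fun z => G z ^ 2) (P e) := fun e => (hintG e).2.1
  have hFY : ∀ e, Integrable (fun z => F z * Y z) (P e) := fun e => (hintF e).1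
  have hGY : ∀ e, Integrable (fun z => G z * Y z) (P e) := fun e => (hintG e).1
  have hFG : ∀ e, Integrable (fun z => F z * G z) (P e) := fun e =>
    myIntMul hmF.aestronglyMeasurable hmG.aestronglyMeasurable (hF2 e) (hG2 e)
  have hGG : ∀ e, Integrable (fun z => G z * G z) (P e) := fun e => by
    have := hG2 e; simpa [pow_two] using this
  have hFint : ∀ e, Integrable F (P e) := fun e =>
    ((memLp_two_iff_integrable_sq hmF.aestronglyMeasurable).2 (hF2 e)).integrable one_le_two
  -- orthogonality: for H m-measurable with H*Y integrable, ∫ H*Y = ∫ H*G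
  have horth : ∀ (H : (Fin p → ℝ) × ℝ → ℝ), StronglyMeasurable[sigmaGen Z] H →
      (∀ e, Integrable (fun z => H z * Y z) (P e)) →
      ∀ e, ∫ z, H z * Y z ∂(P e) = ∫ z, H z * G z ∂(P e) := by
    intro H hHm hHY e
    have h1 : (P e)[fun z => H z * Y z|sigmaGen Z] =ᵐ[P e] H * (P e)[Y|sigmaGen Z] :=
      condExp_mul_of_stronglyMeasurable_left hHm (hHY e) (hYint e)
    have h2 : H * (P e)[Y|sigmaGen Z] =ᵐ[P e] fun z => H z * G z := by
      filter_upwards [hw₀cond e] with z hz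
      simp only [Pi.mul_apply, hz]
    calc ∫ z, H z * Y z ∂(P e)
        = ∫ z, ((P e)[fun z => H z * Y z|sigmaGen Z]) z ∂(P e) :=
          (integral_condExp hm (f := fun z => H z * Y z)).symm
      _ = ∫ z, H z * G z ∂(P e) := integral_congr_ae (h1.trans h2)
  -- risk expansion
  have hexpand : ∀ (H : (Fin p → ℝ) × ℝ → ℝ), (∀ e, Integrable (fun z => H z * Y z) (P e)) →
      (∀ e, Integrable (fun z => H z ^ 2) (P e)) →
      ∀ e, ∫ z, (Y z - H z) ^ 2 ∂(P e)
        = ∫ z, Y z ^ 2 ∂(P e) - 2 * ∫ z, H z * Y z ∂(P e) + ∫ z, H z ^ 2 ∂(P e) := by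
    intro H hHY hH2 e
    rw [show (fun z => (Y z - H z) ^ 2)
        = fun z => Y z ^ 2 - 2 * (H z * Y z) + H z ^ 2 from by funext z; ring]
    have h1 : Integrable (fun z => Y z ^ 2 - 2 * (H z * Y z)) (P e) :=
      (hYsq e).sub ((hHY e).const_mul 2)
    rw [integral_add h1 (hH2 e),
      integral_sub (hYsq e) ((hHY e).const_mul 2), integral_const_mul 2 _]
  -- risk(F) = risk(G) + ∫ (F - G)^2 in each environment
  have hsqexp : ∀ e, ∫ z, (F z - G z) ^ 2 ∂(P e)
      = ∫ z, F z ^ 2 ∂(P e) - 2 * ∫ z, F z * G z ∂(P e) + ∫ z, G z ^ 2 ∂(P e) := by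
    intro e
    rw [show (fun z => (F z - G z) ^ 2)
        = fun z => F z ^ 2 - 2 * (F z * G z) + G z ^ 2 from by funext z; ring]
    have h1 : Integrable (fun z => F z ^ 2 - 2 * (F z * G z)) (P e) :=
      (hF2 e).sub ((hFG e).const_mul 2)
    rw [integral_add h1 (hG2 e),
      integral_sub (hF2 e) ((hFG e).const_mul 2), integral_const_mul 2 _]
  have hkey : ∀ e, risk P (fun x => wstar (Φstar x)) e
      = risk P (fun x => w₀ (Φstar x)) e + ∫ z, (F z - G z) ^ 2 ∂(P e) := by
    intro e
    have hRF : risk P (fun x => wstar (Φstar x)) e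
        = ∫ z, Y z ^ 2 ∂(P e) - 2 * ∫ z, F z * G z ∂(P e) + ∫ z, F z ^ 2 ∂(P e) := by
      rw [risk, show (fun z : (Fin p → ℝ) × ℝ => (z.2 - wstar (Φstar z.1)) ^ 2)
          = fun z => (Y z - F z) ^ 2 from rfl,
        hexpand F hFY hF2 e, horth F hFm hFY e]
    have hGYG : ∫ z, G z * Y z ∂(P e) = ∫ z, G z * G z ∂(P e) := horth G hGm hGY e
    have hRG : risk P (fun x => w₀ (Φstar x)) e
        = ∫ z, Y z ^ 2 ∂(P e) - 2 * ∫ z, G z * G z ∂(P e) + ∫ z, G z ^ 2 ∂(P e) := by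
      rw [risk, show (fun z : (Fin p → ℝ) × ℝ => (z.2 - w₀ (Φstar z.1)) ^ 2)
          = fun z => (Y z - G z) ^ 2 from rfl,
        hexpand G hGY hG2 e, hGYG]
    have hGGsq : ∫ z, G z * G z ∂(P e) = ∫ z, G z ^ 2 ∂(P e) := by
      congr 1; funext z; ring
    rw [hRF, hRG, hsqexp e, hGGsq]; ring
  -- minimality forces ∫ (F - G)^2 = 0 for each e
  have hle := hmin w₀ hw₀ Φstar hΦ
  have hsum0 : ∑ e : E, αs e * ∫ z, (F z - G z) ^ 2 ∂(P e) ≤ 0 := by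
    have : ∑ e : E, αs e * risk P (fun x => wstar (Φstar x)) e
        = ∑ e : E, αs e * risk P (fun x => w₀ (Φstar x)) e
          + ∑ e : E, αs e * ∫ z, (F z - G z) ^ 2 ∂(P e) := by
      rw [← Finset.sum_add_distrib]
      exact Finset.sum_congr rfl fun e _ => by rw [hkey e]; ring
    linarith [hle, this.symm.le, this.le]
  have hdnn : ∀ e : E, 0 ≤ αs e * ∫ z, (F z - G z) ^ 2 ∂(P e) := fun e =>
    mul_nonneg (hαs e).le (integral_nonneg fun z => sq_nonneg _)
  have hzero : ∀ e : E, ∫ z, (F z - G z) ^ 2 ∂(P e) = 0 := by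
    intro e
    have hsum_eq : ∑ e : E, αs e * ∫ z, (F z - G z) ^ 2 ∂(P e) = 0 :=
      le_antisymm hsum0 (Finset.sum_nonneg fun e _ => hdnn e)
    have := (Finset.sum_eq_zero_iff_of_nonneg (fun e _ => hdnn e)).mp hsum_eq e
      (Finset.mem_univ e)
    exact (mul_eq_zero.mp this).resolve_left (hαs e).ne'
  -- hence F = G a.e. in each environment
  have hFGae : ∀ e : E, F =ᵐ[P e] G := by
    intro e
    have hint2 : Integrable (fun z => (F z - G z) ^ 2) (P e) := by
      rw [show (fun z => (F z - G z) ^ 2)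
          = fun z => F z ^ 2 - 2 * (F z * G z) + G z ^ 2 from by funext z; ring]
      exact ((hF2 e).sub ((hFG e).const_mul 2)).add (hG2 e)
    have h0 : (fun z => (F z - G z) ^ 2) =ᵐ[P e] 0 :=
      (integral_eq_zero_iff_of_nonneg (fun z => sq_nonneg _) hint2).mp (hzero e)
    filter_upwards [h0] with z hz
    have : (F z - G z) ^ 2 = 0 := hz
    have := (pow_eq_zero_iff two_ne_zero).mp this
    linarith [sub_eq_zero.mp this]
  -- conclude via tower property
  intro e
  calc (P e)[Y|sigmaGen F]
      =ᵐ[P e] (P e)[(P e)[Y|sigmaGen Z]|sigmaGen F] := (condExp_condExp_of_le hm'm hm).symm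
    _ =ᵐ[P e] (P e)[F|sigmaGen F] := condExp_congr_ae ((hw₀cond e).trans (hFGae e).symm)
    _ =ᵐ[P e] F := by rw [condExp_of_stronglyMeasurable hm' hFm' (hFint e)]
end
end

section
/- Assume conditional-mean realizability. Then for every P ∈ Ξ(ρ,σ²), every FAIRM solution (w^F, Φ^F), every CMI solution (w^C, Φ^C), and every e ∈ E: E[y^e | σ(w^F(Φ^F(x^e)))] = w^F(Φ^F(x^e)) P^e-a.s. and E[y^e | σ(w^C(Φ^C(x^e)))] = w^C(Φ^C(x^e)) P^e-a.s.; that is, FAIRM and CMI have zero multi-calibration bias in every environment. -/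
open MeasureTheory

noncomputable section

/-- The σ-algebra generated by the features `x`. -/
def mX {p : ℕ} : MeasurableSpace ((Fin p → ℝ) × ℝ) := sigmaGen (fun z => z.1)

/-- A member of the class `Ξ(ρ, σ²)`: a family of environment distributions together with
a designated full-information FAIRM solution, such that `I* ≠ ∅`, the diversity condition
holds, the conditional variance is bounded by `σ²`, and the approximation bias of the
full-information FAIRM solution is bounded by `ρ`. -/
structure Fam (p q : ℕ) (E : Type) [Fintype E] (Etr : Finset E)
    (FΦ : Set ((Fin p → ℝ) → (Fin q → ℝ))) (Fw : Set ((Fin q → ℝ) → ℝ))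
    (αs : E → ℝ) (ρ σ2 : ℝ) where
  P : E → Measure ((Fin p → ℝ) × ℝ)
  prob : ∀ e, IsProbabilityMeasure (P e)
  reg : Regular P FΦ Fw
  wstar : (Fin q → ℝ) → ℝ
  Φstar : (Fin p → ℝ) → (Fin q → ℝ)
  sol : IsFullSol P FΦ Fw αs wstar Φstar
  inv_nonempty : (InvSet P FΦ Fw).Nonempty
  diverse : Diversity P Etr FΦ Fw
  noise : ∀ e : E, ∀ᵐ z ∂(P e),
    ((P e)[(fun z' : (Fin p → ℝ) × ℝ =>
        (z'.2 - ((P e)[(fun z'' : (Fin p → ℝ) × ℝ => z''.2) | mX]) z') ^ 2) | mX]) z ≤ σ2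
  bias : ∀ e : E,
    ∫ z, (((P e)[(fun z' : (Fin p → ℝ) × ℝ => z'.2) | mX]) z - wstar (Φstar z.1)) ^ 2
      ∂(P e) ≤ ρ

/-- An ERM solution: minimizer of the weighted training risk over `F_w × F_Φ`. -/
def IsERMSol {p q : ℕ} {E : Type} (P : E → Measure ((Fin p → ℝ) × ℝ)) (Etr : Finset E)
    (FΦ : Set ((Fin p → ℝ) → (Fin q → ℝ))) (Fw : Set ((Fin q → ℝ) → ℝ)) (α : E → ℝ)
    (w : (Fin q → ℝ) → ℝ) (Φ : (Fin p → ℝ) → (Fin q → ℝ)) : Prop :=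
  w ∈ Fw ∧ Φ ∈ FΦ ∧
  ∀ w' ∈ Fw, ∀ Φ' ∈ FΦ,
    ∑ e ∈ Etr, α e * risk P (fun x => w (Φ x)) e ≤
      ∑ e ∈ Etr, α e * risk P (fun x => w' (Φ' x)) e

/-- A Maximin solution: minimizer of the worst training-environment risk over `F_w × F_Φ`. -/
def IsMMSol {p q : ℕ} {E : Type} (P : E → Measure ((Fin p → ℝ) × ℝ)) (Etr : Finset E)
    (hEtr : Etr.Nonempty)
    (FΦ : Set ((Fin p → ℝ) → (Fin q → ℝ))) (Fw : Set ((Fin q → ℝ) → ℝ))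
    (w : (Fin q → ℝ) → ℝ) (Φ : (Fin p → ℝ) → (Fin q → ℝ)) : Prop :=
  w ∈ Fw ∧ Φ ∈ FΦ ∧
  ∀ w' ∈ Fw, ∀ Φ' ∈ FΦ,
    Etr.sup' hEtr (fun e => risk P (fun x => w (Φ x)) e) ≤
      Etr.sup' hEtr (fun e => risk P (fun x => w' (Φ' x)) e)

/-- A CMI solution: minimizer of the weighted training risk over pairs `(w, Φ)` such that
`w∘Φ` is the conditional mean of `y` given `Φ(x)` in every environment. -/
def IsCMISol {p q : ℕ} {E : Type} [Fintype E] (P : E → Measure ((Fin p → ℝ) × ℝ))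
    (Etr : Finset E)
    (FΦ : Set ((Fin p → ℝ) → (Fin q → ℝ))) (Fw : Set ((Fin q → ℝ) → ℝ)) (α : E → ℝ)
    (w : (Fin q → ℝ) → ℝ) (Φ : (Fin p → ℝ) → (Fin q → ℝ)) : Prop :=
  w ∈ Fw ∧ Φ ∈ FΦ ∧
  (∀ e : E, (P e)[(fun z : (Fin p → ℝ) × ℝ => z.2) | sigmaGen (fun z => Φ z.1)]
      =ᵐ[P e] fun z => w (Φ z.1)) ∧
  ∀ w' ∈ Fw, ∀ Φ' ∈ FΦ,
    (∀ e : E, (P e)[(fun z : (Fin p → ℝ) × ℝ => z.2) | sigmaGen (fun z => Φ' z.1)]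
        =ᵐ[P e] fun z => w' (Φ' z.1)) →
    ∑ e ∈ Etr, α e * risk P (fun x => w (Φ x)) e ≤
      ∑ e ∈ Etr, α e * risk P (fun x => w' (Φ' x)) e


namespace Stmt9Aux

open MeasureTheory MeasurableSpace

variable {α : Type*} [MeasurableSpace α] {μ : Measure α}

lemma integrable_mul_of_sq {a b : α → ℝ}
    (ha : AEStronglyMeasurable a μ) (hb : AEStronglyMeasurable b μ)
    (ha2 : Integrable (fun x => (a x) ^ 2) μ) (hb2 : Integrable (fun x => (b x) ^ 2) μ) :
    Integrable (fun x => a x * b x) μ := by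
  have hbound : Integrable (fun x => ((a x) ^ 2 + (b x) ^ 2) / 2) μ :=
    (ha2.add hb2).div_const 2
  refine Integrable.mono' hbound (ha.mul hb) ?_
  filter_upwards with x
  rw [Real.norm_eq_abs, abs_mul]
  nlinarith [sq_nonneg (|a x| - |b x|), sq_abs (a x), sq_abs (b x),
    abs_nonneg (a x), abs_nonneg (b x)]

lemma integrable_of_sq [IsFiniteMeasure μ] {a : α → ℝ}
    (ha : AEStronglyMeasurable a μ)
    (ha2 : Integrable (fun x => (a x) ^ 2) μ) : Integrable a μ :=
  ((memLp_two_iff_integrable_sq ha).mpr ha2).integrable one_le_two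

/-- `∫(y-a)² - ∫(y-b)² = ∫a² - 2∫(ay) + ∫b²` when `∫by = ∫b²` (orthogonality for `b`). -/
lemma risk_sub_eq {a b y : α → ℝ}
    (Iya : Integrable (fun x => (y x - a x) ^ 2) μ)
    (Iyb : Integrable (fun x => (y x - b x) ^ 2) μ)
    (Ia2 : Integrable (fun x => (a x) ^ 2) μ)
    (Ib2 : Integrable (fun x => (b x) ^ 2) μ)
    (Iay : Integrable (fun x => a x * y x) μ)
    (Iby : Integrable (fun x => b x * y x) μ)
    (Hbb : ∫ x, b x * y x ∂μ = ∫ x, (b x) ^ 2 ∂μ) :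
    ∫ x, (y x - a x) ^ 2 ∂μ - ∫ x, (y x - b x) ^ 2 ∂μ =
      ∫ x, (a x) ^ 2 ∂μ - 2 * ∫ x, a x * y x ∂μ + ∫ x, (b x) ^ 2 ∂μ := by
  rw [← integral_sub Iya Iyb]
  have h1 : (fun x => (y x - a x) ^ 2 - (y x - b x) ^ 2) =
      fun x => ((a x) ^ 2 - (b x) ^ 2) - (2 * (a x * y x) - 2 * (b x * y x)) := by
    funext x; ring
  have I1 : Integrable (fun x => (a x) ^ 2 - (b x) ^ 2) μ := Ia2.sub Ib2
  have I2 : Integrable (fun x => 2 * (a x * y x) - 2 * (b x * y x)) μ :=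
    (Iay.const_mul 2).sub (Iby.const_mul 2)
  have I3 : Integrable (fun x => 2 * (a x * y x)) μ := Iay.const_mul 2
  have I4 : Integrable (fun x => 2 * (b x * y x)) μ := Iby.const_mul 2
  rw [h1, integral_sub I1 I2, integral_sub Ia2 Ib2, integral_sub I3 I4,
    integral_const_mul, integral_const_mul, Hbb]
  ring

lemma sq_sub_eq {a b : α → ℝ}
    (Ia2 : Integrable (fun x => (a x) ^ 2) μ)
    (Ib2 : Integrable (fun x => (b x) ^ 2) μ)
    (Iab : Integrable (fun x => a x * b x) μ) :
    ∫ x, (a x - b x) ^ 2 ∂μ =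
      ∫ x, (a x) ^ 2 ∂μ - 2 * ∫ x, a x * b x ∂μ + ∫ x, (b x) ^ 2 ∂μ := by
  have h1 : (fun x => (a x - b x) ^ 2) =
      fun x => ((a x) ^ 2 - 2 * (a x * b x)) + (b x) ^ 2 := by
    funext x; ring
  have I1 : Integrable (fun x => (a x) ^ 2 - 2 * (a x * b x)) μ :=
    Ia2.sub (Iab.const_mul 2)
  have I2 : Integrable (fun x => 2 * (a x * b x)) μ := Iab.const_mul 2
  rw [h1, integral_add I1 Ib2, integral_sub Ia2 I2, integral_const_mul]

/-- Orthogonality: if `w∘Φ` is a version of `E[y | σ(Φ∘fst)]` then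
`∫ v(Φ x) y = ∫ v(Φ x) w(Φ x)` for measurable `v`. -/
lemma cross {p q : ℕ} (μ : Measure ((Fin p → ℝ) × ℝ)) [IsProbabilityMeasure μ]
    {Φ : (Fin p → ℝ) → (Fin q → ℝ)} {v w : (Fin q → ℝ) → ℝ}
    (hΦ : Measurable Φ) (hv : Measurable v)
    (hvy : Integrable (fun z : (Fin p → ℝ) × ℝ => v (Φ z.1) * z.2) μ)
    (hy : Integrable (fun z : (Fin p → ℝ) × ℝ => z.2) μ)
    (hcond : μ[(fun z : (Fin p → ℝ) × ℝ => z.2) |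
        sigmaGen (fun z : (Fin p → ℝ) × ℝ => Φ z.1)] =ᵐ[μ] fun z => w (Φ z.1)) :
    ∫ z, v (Φ z.1) * z.2 ∂μ = ∫ z, v (Φ z.1) * w (Φ z.1) ∂μ := by
  have hmeasΦfst : Measurable (fun z : (Fin p → ℝ) × ℝ => Φ z.1) :=
    hΦ.comp measurable_fst
  let m₁ : MeasurableSpace ((Fin p → ℝ) × ℝ) :=
    sigmaGen (fun z : (Fin p → ℝ) × ℝ => Φ z.1)
  have hm₁ : m₁ ≤ (Prod.instMeasurableSpace : MeasurableSpace ((Fin p → ℝ) × ℝ)) :=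
    measurable_iff_comap_le.mp (by exact hmeasΦfst)
  have hΦm : Measurable[m₁] (fun z : (Fin p → ℝ) × ℝ => Φ z.1) :=
    measurable_iff_comap_le.mpr le_rfl
  have hsmv : StronglyMeasurable[m₁] (fun z : (Fin p → ℝ) × ℝ => v (Φ z.1)) :=
    ((hv.comp hΦm)).stronglyMeasurable
  have hpull := condExp_mul_of_stronglyMeasurable_left (μ := μ)
    (f := fun z : (Fin p → ℝ) × ℝ => v (Φ z.1))
    (g := fun z : (Fin p → ℝ) × ℝ => z.2) hsmv hvy hy
  haveI : SigmaFinite (μ.trim hm₁) := inferInstance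
  calc ∫ z, v (Φ z.1) * z.2 ∂μ
      = ∫ z, (μ[(fun z : (Fin p → ℝ) × ℝ => v (Φ z.1)) *
          (fun z : (Fin p → ℝ) × ℝ => z.2)|m₁]) z ∂μ :=
        (integral_condExp (μ := μ) (f := (fun z : (Fin p → ℝ) × ℝ => v (Φ z.1)) *
          (fun z : (Fin p → ℝ) × ℝ => z.2)) hm₁).symm
    _ = ∫ z, ((fun z : (Fin p → ℝ) × ℝ => v (Φ z.1)) *
          (μ[(fun z : (Fin p → ℝ) × ℝ => z.2)|m₁])) z ∂μ := integral_congr_ae hpull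
    _ = ∫ z, v (Φ z.1) * w (Φ z.1) ∂μ := by
        refine integral_congr_ae ?_
        filter_upwards [hcond] with z hz
        simp [m₁, hz]

/-- Tower argument: if `g` is a version of `E[y | σ(Φ∘fst)]` that is measurable with
respect to the smaller σ-algebra `σ(w∘Φ∘fst)`, then it is also a version of the
conditional expectation given that smaller σ-algebra. -/
lemma tower {p q : ℕ} (μ : Measure ((Fin p → ℝ) × ℝ)) [IsProbabilityMeasure μ]
    {Φ : (Fin p → ℝ) → (Fin q → ℝ)} {w : (Fin q → ℝ) → ℝ}
    (hΦ : Measurable Φ) (hw : Measurable w)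
    (hint : Integrable (fun z : (Fin p → ℝ) × ℝ => w (Φ z.1)) μ)
    (hcond : μ[(fun z : (Fin p → ℝ) × ℝ => z.2) |
        sigmaGen (fun z : (Fin p → ℝ) × ℝ => Φ z.1)] =ᵐ[μ] fun z => w (Φ z.1)) :
    μ[(fun z : (Fin p → ℝ) × ℝ => z.2) |
        sigmaGen (fun z : (Fin p → ℝ) × ℝ => w (Φ z.1))]
      =ᵐ[μ] fun z => w (Φ z.1) := by
  have hmeasΦfst : Measurable (fun z : (Fin p → ℝ) × ℝ => Φ z.1) :=
    hΦ.comp measurable_fst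
  let m₁ : MeasurableSpace ((Fin p → ℝ) × ℝ) :=
    sigmaGen (fun z : (Fin p → ℝ) × ℝ => Φ z.1)
  let m₂ : MeasurableSpace ((Fin p → ℝ) × ℝ) :=
    sigmaGen (fun z : (Fin p → ℝ) × ℝ => w (Φ z.1))
  have hm₁ : m₁ ≤ (Prod.instMeasurableSpace : MeasurableSpace ((Fin p → ℝ) × ℝ)) :=
    measurable_iff_comap_le.mp (by exact hmeasΦfst)
  have hm₂₁ : m₂ ≤ m₁ := by
    have h1 : m₂ = MeasurableSpace.comap (fun z : (Fin p → ℝ) × ℝ => Φ z.1)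
        (MeasurableSpace.comap w inferInstance) :=
      (MeasurableSpace.comap_comp (f := w)
        (g := fun z : (Fin p → ℝ) × ℝ => Φ z.1)).symm
    show m₂ ≤ m₁
    rw [h1]
    exact MeasurableSpace.comap_mono (measurable_iff_comap_le.mp (by exact hw))
  have hm₂ : m₂ ≤ (Prod.instMeasurableSpace : MeasurableSpace ((Fin p → ℝ) × ℝ)) := hm₂₁.trans hm₁
  haveI : SigmaFinite (μ.trim hm₁) := inferInstance
  haveI : SigmaFinite (μ.trim hm₂) := inferInstance
  have hsm : StronglyMeasurable[m₂] (fun z : (Fin p → ℝ) × ℝ => w (Φ z.1)) :=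
    (measurable_iff_comap_le.mpr le_rfl).stronglyMeasurable
  calc μ[(fun z : (Fin p → ℝ) × ℝ => z.2)|m₂]
      =ᵐ[μ] μ[μ[(fun z : (Fin p → ℝ) × ℝ => z.2)|m₁]|m₂] :=
        (condExp_condExp_of_le hm₂₁ hm₁).symm
    _ =ᵐ[μ] μ[(fun z : (Fin p → ℝ) × ℝ => w (Φ z.1))|m₂] := condExp_congr_ae hcond
    _ =ᵐ[μ] fun z : (Fin p → ℝ) × ℝ => w (Φ z.1) := by
        have h := condExp_of_stronglyMeasurable (μ := μ) hm₂ hsm hint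
        rw [h]

end Stmt9Aux

/-- under conditional-mean realizability, every FAIRM solution and every CMI
solution of a family in `Ξ(ρ,σ²)` has zero multi-calibration bias in every environment. -/
theorem stmt9 {p : ℕ} {E : Type} [Fintype E] [Nonempty E]
    (Etr : Finset E) (hEtr : Etr.Nonempty)
    (FΦ : Set ((Fin p → ℝ) → (Fin p → ℝ))) (Fw : Set ((Fin p → ℝ) → ℝ))
    (hsel : ∀ S : Finset (Fin p), (fun x j => if j ∈ S then x j else 0) ∈ FΦ)
    (hlin : ∀ b : Fin p → ℝ, (fun φ : Fin p → ℝ => ∑ j, b j * φ j) ∈ Fw)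
    (αs : E → ℝ) (hαs : ∀ e, 0 < αs e) (hαssum : ∑ e : E, αs e = 1)
    (α : E → ℝ) (hα : ∀ e ∈ Etr, 0 < α e) (hαsum : ∑ e ∈ Etr, α e = 1)
    (ρ σ2 : ℝ) (hρ : 0 < ρ) (hσ2 : 0 < σ2)
    (F : Fam p p E Etr FΦ Fw αs ρ σ2) (hcmr : CMR F.P FΦ Fw) :
    (∀ wF ΦF, IsFairmSol F.P Etr FΦ Fw α wF ΦF →
      ∀ e : E,
        (F.P e)[(fun z : (Fin p → ℝ) × ℝ => z.2) |
            sigmaGen (fun z => wF (ΦF z.1))]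
          =ᵐ[F.P e] fun z => wF (ΦF z.1)) ∧
    (∀ wC ΦC, IsCMISol F.P Etr FΦ Fw α wC ΦC →
      ∀ e : E,
        (F.P e)[(fun z : (Fin p → ℝ) × ℝ => z.2) |
            sigmaGen (fun z => wC (ΦC z.1))]
          =ᵐ[F.P e] fun z => wC (ΦC z.1)) := by
  obtain ⟨hmeasΦ, hmeasw, hy2, hx2, hints⟩ := F.reg
  haveI hPP : ∀ e, IsProbabilityMeasure (F.P e) := F.prob
  constructor
  · -- FAIRM part
    rintro wF ΦF ⟨hwF, hΦFtr, hmin⟩ e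
    haveI := hPP e
    -- Step 1: ΦF is invariant.
    have hΦFinv : ΦF ∈ InvSet F.P FΦ Fw := by
      by_contra h
      obtain ⟨u, hu, e1, he1, e2, he2, hne⟩ := F.diverse ΦF hΦFtr.1 h
      have := hΦFtr.2 u hu e1 he1 e2 he2
      rcases hne with h' | h'
      · exact h' this.1
      · exact h' this.2
    -- Step 2: conditional-mean realizability gives wΦ.
    obtain ⟨wΦ, hwΦ, hcond⟩ := hcmr ΦF hΦFinv
    have hΦm : Measurable ΦF := hmeasΦ ΦF hΦFinv.1
    have hwFm : Measurable wF := hmeasw wF hwF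
    have hwΦm : Measurable wΦ := hmeasw wΦ hwΦ
    have haF : ∀ e' : E, AEStronglyMeasurable
        (fun z : (Fin p → ℝ) × ℝ => wF (ΦF z.1)) (F.P e') :=
      fun e' => (hwFm.comp (hΦm.comp measurable_fst)).aestronglyMeasurable
    have haΦ : ∀ e' : E, AEStronglyMeasurable
        (fun z : (Fin p → ℝ) × ℝ => wΦ (ΦF z.1)) (F.P e') :=
      fun e' => (hwΦm.comp (hΦm.comp measurable_fst)).aestronglyMeasurable
    have hIy : ∀ e' : E, Integrable (fun z : (Fin p → ℝ) × ℝ => z.2) (F.P e') := by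
      intro e'; haveI := hPP e'; exact (hy2 e').integrable one_le_two
    -- Integrability packages.
    have hIF := fun e' => hints ΦF hΦFinv.1 wF hwF e'
    have hIΦ := fun e' => hints ΦF hΦFinv.1 wΦ hwΦ e'
    -- Cross identities.
    have HwF : ∀ e' : E, haveI := hPP e';
        ∫ z, wF (ΦF z.1) * z.2 ∂(F.P e') =
          ∫ z, wF (ΦF z.1) * wΦ (ΦF z.1) ∂(F.P e') := by
      intro e'; haveI := hPP e'
      exact Stmt9Aux.cross (F.P e') hΦm hwFm (hIF e').1 (hIy e') (hcond e')
    have HwΦ : ∀ e' : E,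
        ∫ z, wΦ (ΦF z.1) * z.2 ∂(F.P e') =
          ∫ z, (wΦ (ΦF z.1)) ^ 2 ∂(F.P e') := by
      intro e'; haveI := hPP e'
      have h := Stmt9Aux.cross (F.P e') hΦm hwΦm (hIΦ e').1 (hIy e') (hcond e')
      rw [h]
      exact integral_congr_ae (Filter.Eventually.of_forall fun z => by ring)
    -- Product integrability.
    have hIab : ∀ e' : E, Integrable
        (fun z : (Fin p → ℝ) × ℝ => wF (ΦF z.1) * wΦ (ΦF z.1)) (F.P e') := by
      intro e'
      exact Stmt9Aux.integrable_mul_of_sq (haF e') (haΦ e') (hIF e').2.1 (hIΦ e').2.1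
    -- Risk difference identities.
    have key1 : ∀ e' : E,
        risk F.P (fun x => wF (ΦF x)) e' - risk F.P (fun x => wΦ (ΦF x)) e' =
          sqT F.P ΦF wF e' - 2 * covT F.P ΦF wF e' + sqT F.P ΦF wΦ e' := by
      intro e'
      have h := Stmt9Aux.risk_sub_eq (μ := F.P e')
        (a := fun z : (Fin p → ℝ) × ℝ => wF (ΦF z.1))
        (b := fun z : (Fin p → ℝ) × ℝ => wΦ (ΦF z.1))
        (y := fun z : (Fin p → ℝ) × ℝ => z.2)
        (hIF e').2.2 (hIΦ e').2.2 (hIF e').2.1 (hIΦ e').2.1 (hIF e').1 (hIΦ e').1 (HwΦ e')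
      simpa [risk, covT, sqT] using h
    have key2 : ∀ e' : E,
        ∫ z, (wF (ΦF z.1) - wΦ (ΦF z.1)) ^ 2 ∂(F.P e') =
          sqT F.P ΦF wF e' - 2 * covT F.P ΦF wF e' + sqT F.P ΦF wΦ e' := by
      intro e'
      have h := Stmt9Aux.sq_sub_eq (μ := F.P e')
        (a := fun z : (Fin p → ℝ) × ℝ => wF (ΦF z.1))
        (b := fun z : (Fin p → ℝ) × ℝ => wΦ (ΦF z.1))
        (hIF e').2.1 (hIΦ e').2.1 (hIab e')
      rw [h, ← HwF e']
      simp [covT, sqT]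
    -- Optimality gives zero risk gap on training environments.
    have hriskdiff_nonneg : ∀ e' : E,
        0 ≤ risk F.P (fun x => wF (ΦF x)) e' - risk F.P (fun x => wΦ (ΦF x)) e' := by
      intro e'
      rw [key1 e', ← key2 e']
      exact integral_nonneg fun z => sq_nonneg _
    have hopt := hmin wΦ hwΦ ΦF hΦFtr
    have hsum_le : ∑ e' ∈ Etr, α e' *
        (risk F.P (fun x => wF (ΦF x)) e' - risk F.P (fun x => wΦ (ΦF x)) e') ≤ 0 := by
      have h1 : ∑ e' ∈ Etr, α e' *
          (risk F.P (fun x => wF (ΦF x)) e' - risk F.P (fun x => wΦ (ΦF x)) e') =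
          ∑ e' ∈ Etr, α e' * risk F.P (fun x => wF (ΦF x)) e' -
          ∑ e' ∈ Etr, α e' * risk F.P (fun x => wΦ (ΦF x)) e' := by
        rw [← Finset.sum_sub_distrib]
        exact Finset.sum_congr rfl fun e' _ => by ring
      rw [h1]
      exact sub_nonpos.mpr hopt
    have hterm_nonneg : ∀ e' ∈ Etr, 0 ≤ α e' *
        (risk F.P (fun x => wF (ΦF x)) e' - risk F.P (fun x => wΦ (ΦF x)) e') :=
      fun e' he' => mul_nonneg (hα e' he').le (hriskdiff_nonneg e')
    have hzero : ∀ e' ∈ Etr, α e' *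
        (risk F.P (fun x => wF (ΦF x)) e' - risk F.P (fun x => wΦ (ΦF x)) e') = 0 :=
      (Finset.sum_eq_zero_iff_of_nonneg hterm_nonneg).mp
        (le_antisymm hsum_le (Finset.sum_nonneg hterm_nonneg))
    obtain ⟨e0, he0⟩ := hEtr
    have hgap0 : risk F.P (fun x => wF (ΦF x)) e0 - risk F.P (fun x => wΦ (ΦF x)) e0 = 0 := by
      have := hzero e0 he0
      exact (mul_eq_zero.mp this).resolve_left (ne_of_gt (hα e0 he0))
    -- Invariance: the risk gap is the same in all environments.
    have hInvF := hΦFinv.2 wF hwF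
    have hInvΦ := hΦFinv.2 wΦ hwΦ
    have hgap : ∀ e' : E,
        ∫ z, (wF (ΦF z.1) - wΦ (ΦF z.1)) ^ 2 ∂(F.P e') = 0 := by
      intro e'
      rw [key2 e']
      have h1 := (hInvF e' e0).1
      have h2 := (hInvF e' e0).2
      have h3 := (hInvΦ e' e0).2
      rw [h1, h2, h3, ← key1 e0, hgap0]
    -- a.e. equality of wF∘ΦF and wΦ∘ΦF in every environment.
    have haeeq : ∀ e' : E,
        (fun z : (Fin p → ℝ) × ℝ => wF (ΦF z.1)) =ᵐ[F.P e']
          fun z => wΦ (ΦF z.1) := by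
      intro e'; haveI := hPP e'
      have hI2 : Integrable
          (fun z : (Fin p → ℝ) × ℝ => (wF (ΦF z.1) - wΦ (ΦF z.1)) ^ 2) (F.P e') := by
        have hm2 : MemLp (fun z : (Fin p → ℝ) × ℝ => wF (ΦF z.1) - wΦ (ΦF z.1)) 2 (F.P e') :=
          ((memLp_two_iff_integrable_sq (haF e')).mpr (hIF e').2.1).sub
            ((memLp_two_iff_integrable_sq (haΦ e')).mpr (hIΦ e').2.1)
        exact (memLp_two_iff_integrable_sq ((haF e').sub (haΦ e'))).mp hm2
      have h0 := (integral_eq_zero_iff_of_nonneg (fun z => sq_nonneg _) hI2).mp (hgap e')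
      filter_upwards [h0] with z hz
      have hz' : (wF (ΦF z.1) - wΦ (ΦF z.1)) ^ 2 = 0 := hz
      have := (pow_eq_zero_iff two_ne_zero).mp hz'
      linarith [sub_eq_zero.mp this]
    -- Conclude via the tower lemma.
    have hcondF : (F.P e)[(fun z : (Fin p → ℝ) × ℝ => z.2) |
        sigmaGen (fun z : (Fin p → ℝ) × ℝ => ΦF z.1)] =ᵐ[F.P e]
          fun z => wF (ΦF z.1) := (hcond e).trans (haeeq e).symm
    exact Stmt9Aux.tower (F.P e) hΦm hwFm
      (Stmt9Aux.integrable_of_sq (haF e) (hIF e).2.1) hcondF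
  · -- CMI part
    rintro wC ΦC ⟨hwC, hΦC, hcondC, -⟩ e
    haveI := hPP e
    have hΦm : Measurable ΦC := hmeasΦ ΦC hΦC
    have hwCm : Measurable wC := hmeasw wC hwC
    have haC : AEStronglyMeasurable
        (fun z : (Fin p → ℝ) × ℝ => wC (ΦC z.1)) (F.P e) :=
      (hwCm.comp (hΦm.comp measurable_fst)).aestronglyMeasurable
    exact Stmt9Aux.tower (F.P e) hΦm hwCm
      (Stmt9Aux.integrable_of_sq haC (hints ΦC hΦC wC hwC e).2.1) (hcondC e)
end
end

section
/- Assume the uniform-deviation hypothesis and the empirical diversity condition. Then the empirical feasible set equals I*: every Φ ∈ I* is empirically feasible, and every empirically feasible Φ ∈ F_Φ belongs to I*. -/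
open MeasureTheory

noncomputable section

/-- Empirical covariance-type moment `n_e⁻¹ Σ_i u(Φ(x_i^e))·y_i^e`. -/
def empCov {p q : ℕ} {E : Type} (n : E → ℕ)
    (X : (e : E) → Fin (n e) → (Fin p → ℝ)) (Y : (e : E) → Fin (n e) → ℝ)
    (Φ : (Fin p → ℝ) → (Fin q → ℝ)) (u : (Fin q → ℝ) → ℝ) (e : E) : ℝ :=
  (∑ i, u (Φ (X e i)) * Y e i) / (n e : ℝ)

/-- Empirical second moment `n_e⁻¹ Σ_i u(Φ(x_i^e))²`. -/
def empSq {p q : ℕ} {E : Type} (n : E → ℕ)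
    (X : (e : E) → Fin (n e) → (Fin p → ℝ))
    (Φ : (Fin p → ℝ) → (Fin q → ℝ)) (u : (Fin q → ℝ) → ℝ) (e : E) : ℝ :=
  (∑ i, (u (Φ (X e i))) ^ 2) / (n e : ℝ)

/-- Uniform-deviation hypothesis with levels `ρ₁/2` and `ρ₂/2`. -/
def UnifDev {p q : ℕ} {E : Type} (P : E → Measure ((Fin p → ℝ) × ℝ)) (Etr : Finset E)
    (FΦ : Set ((Fin p → ℝ) → (Fin q → ℝ))) (Fw : Set ((Fin q → ℝ) → ℝ))
    (n : E → ℕ) (X : (e : E) → Fin (n e) → (Fin p → ℝ)) (Y : (e : E) → Fin (n e) → ℝ)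
    (ρ1 ρ2 : ℝ) : Prop :=
  ∀ u ∈ Fw, ∀ Φ ∈ FΦ, ∀ e ∈ Etr,
    |empCov n X Y Φ u e - covT P Φ u e| ≤ ρ1 / 2 ∧
    |empSq n X Φ u e - sqT P Φ u e| ≤ ρ2 / 2

/-- Empirical diversity condition. -/
def EmpDiv {p q : ℕ} {E : Type} (P : E → Measure ((Fin p → ℝ) × ℝ)) (Etr : Finset E)
    (FΦ : Set ((Fin p → ℝ) → (Fin q → ℝ))) (Fw : Set ((Fin q → ℝ) → ℝ))
    (ρ1 ρ2 : ℝ) : Prop :=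
  ∀ Φ ∈ FΦ, Φ ∉ InvSet P FΦ Fw → ∃ u ∈ Fw, ∃ e ∈ Etr, ∃ e' ∈ Etr,
    2 * ρ1 < |covT P Φ u e - covT P Φ u e'| ∨ 2 * ρ2 < |sqT P Φ u e - sqT P Φ u e'|

/-- The empirically feasible set. -/
def EmpFeas {p q : ℕ} {E : Type} (Etr : Finset E)
    (FΦ : Set ((Fin p → ℝ) → (Fin q → ℝ))) (Fw : Set ((Fin q → ℝ) → ℝ))
    (n : E → ℕ) (X : (e : E) → Fin (n e) → (Fin p → ℝ)) (Y : (e : E) → Fin (n e) → ℝ)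
    (ρ1 ρ2 : ℝ) : Set ((Fin p → ℝ) → (Fin q → ℝ)) :=
  {Φ | Φ ∈ FΦ ∧ ∀ u ∈ Fw, ∀ e ∈ Etr, ∀ e' ∈ Etr,
    |empCov n X Y Φ u e - empCov n X Y Φ u e'| ≤ ρ1 ∧
    |empSq n X Φ u e - empSq n X Φ u e'| ≤ ρ2}

/-- An empirical FAIRM solution: minimizer of the empirical squared loss over
`F_w ×` (the empirically feasible set). -/
def IsEmpFairmSol {p q : ℕ} {E : Type} (Etr : Finset E)
    (FΦ : Set ((Fin p → ℝ) → (Fin q → ℝ))) (Fw : Set ((Fin q → ℝ) → ℝ))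
    (n : E → ℕ) (X : (e : E) → Fin (n e) → (Fin p → ℝ)) (Y : (e : E) → Fin (n e) → ℝ)
    (ρ1 ρ2 : ℝ)
    (w : (Fin q → ℝ) → ℝ) (Φ : (Fin p → ℝ) → (Fin q → ℝ)) : Prop :=
  w ∈ Fw ∧ Φ ∈ EmpFeas Etr FΦ Fw n X Y ρ1 ρ2 ∧
  ∀ w' ∈ Fw, ∀ Φ' ∈ EmpFeas Etr FΦ Fw n X Y ρ1 ρ2,
    ∑ e ∈ Etr, ∑ i, (Y e i - w (Φ (X e i))) ^ 2 ≤
      ∑ e ∈ Etr, ∑ i, (Y e i - w' (Φ' (X e i))) ^ 2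

/-- under the uniform-deviation hypothesis and the empirical diversity
condition, the empirical feasible set equals `I*`. -/
theorem stmt12 {p q : ℕ} {E : Type} [Fintype E] [Nonempty E]
    (Etr : Finset E) (hEtr : Etr.Nonempty)
    (P : E → Measure ((Fin p → ℝ) × ℝ)) [∀ e, IsProbabilityMeasure (P e)]
    (FΦ : Set ((Fin p → ℝ) → (Fin q → ℝ))) (Fw : Set ((Fin q → ℝ) → ℝ))
    (hreg : Regular P FΦ Fw)
    (n : E → ℕ) (hn : ∀ e ∈ Etr, 0 < n e)
    (X : (e : E) → Fin (n e) → (Fin p → ℝ)) (Y : (e : E) → Fin (n e) → ℝ)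
    (ρ1 ρ2 : ℝ) (hρ1 : 0 < ρ1) (hρ2 : 0 < ρ2)
    (hdev : UnifDev P Etr FΦ Fw n X Y ρ1 ρ2)
    (hdiv : EmpDiv P Etr FΦ Fw ρ1 ρ2) :
    EmpFeas Etr FΦ Fw n X Y ρ1 ρ2 = InvSet P FΦ Fw := by
  ext Φ
  constructor
  · rintro ⟨hΦ, hfeas⟩
    by_contra hni
    obtain ⟨u, hu, e, he, e', he', hbig⟩ := hdiv Φ hΦ hni
    have h1 := hdev u hu Φ hΦ e he
    have h2 := hdev u hu Φ hΦ e' he'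
    have h3 := hfeas u hu e he e' he'
    rcases hbig with hb | hb
    · have : |covT P Φ u e - covT P Φ u e'| ≤ 2 * ρ1 := by
        have := abs_sub_abs_le_abs_sub (covT P Φ u e) (covT P Φ u e')
        calc |covT P Φ u e - covT P Φ u e'|
            = |(covT P Φ u e - empCov n X Y Φ u e) + (empCov n X Y Φ u e - empCov n X Y Φ u e') + (empCov n X Y Φ u e' - covT P Φ u e')| := by ring_nf
          _ ≤ |covT P Φ u e - empCov n X Y Φ u e| + |empCov n X Y Φ u e - empCov n X Y Φ u e'| + |empCov n X Y Φ u e' - covT P Φ u e'| := by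
              exact (abs_add_le _ _).trans (by linarith [abs_add_le (covT P Φ u e - empCov n X Y Φ u e) (empCov n X Y Φ u e - empCov n X Y Φ u e')])
          _ ≤ ρ1 / 2 + ρ1 + ρ1 / 2 := by
              have ha := h1.1; have hb' := h2.1
              rw [abs_sub_comm] at ha hb'
              linarith [h3.1]
          _ = 2 * ρ1 := by ring
      linarith
    · have : |sqT P Φ u e - sqT P Φ u e'| ≤ 2 * ρ2 := by
        calc |sqT P Φ u e - sqT P Φ u e'|
            = |(sqT P Φ u e - empSq n X Φ u e) + (empSq n X Φ u e - empSq n X Φ u e') + (empSq n X Φ u e' - sqT P Φ u e')| := by ring_nf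
          _ ≤ |sqT P Φ u e - empSq n X Φ u e| + |empSq n X Φ u e - empSq n X Φ u e'| + |empSq n X Φ u e' - sqT P Φ u e'| := by
              exact (abs_add_le _ _).trans (by linarith [abs_add_le (sqT P Φ u e - empSq n X Φ u e) (empSq n X Φ u e - empSq n X Φ u e')])
          _ ≤ ρ2 / 2 + ρ2 + ρ2 / 2 := by
              have ha := h1.2; have hb' := h2.2
              rw [abs_sub_comm] at ha hb'
              linarith [h3.2]
          _ = 2 * ρ2 := by ring
      linarith
  · rintro ⟨hΦ, hinv⟩
    refine ⟨hΦ, fun u hu e he e' he' => ?_⟩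
    have h1 := hdev u hu Φ hΦ e he
    have h2 := hdev u hu Φ hΦ e' he'
    obtain ⟨hc, hs⟩ := hinv u hu e e'
    constructor
    · calc |empCov n X Y Φ u e - empCov n X Y Φ u e'|
          = |(empCov n X Y Φ u e - covT P Φ u e) + (covT P Φ u e' - empCov n X Y Φ u e')| := by rw [hc]; ring_nf
        _ ≤ |empCov n X Y Φ u e - covT P Φ u e| + |covT P Φ u e' - empCov n X Y Φ u e'| := abs_add_le _ _
        _ ≤ ρ1 / 2 + ρ1 / 2 := by
            have := h2.1; rw [abs_sub_comm] at this; linarith [h1.1]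
        _ = ρ1 := by ring
    · calc |empSq n X Φ u e - empSq n X Φ u e'|
          = |(empSq n X Φ u e - sqT P Φ u e) + (sqT P Φ u e' - empSq n X Φ u e')| := by rw [hs]; ring_nf
        _ ≤ |empSq n X Φ u e - sqT P Φ u e| + |sqT P Φ u e' - empSq n X Φ u e'| := abs_add_le _ _
        _ ≤ ρ2 / 2 + ρ2 / 2 := by
            have := h2.2; rw [abs_sub_comm] at this; linarith [h1.2]
        _ = ρ2 := by ring
end
end

section
/- Assume the uniform-deviation hypothesis, the empirical diversity condition, and I* ≠ ∅. Then for every empirical FAIRM solution (ŵ, Φ̂) and every full-information FAIRM solution (w*, Φ*): max_{e∈E} (R^e(ŵ∘Φ̂) − R^e(w*∘Φ*)) ≤ 4ρ_1 + 2ρ_2. -/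
open MeasureTheory

noncomputable section

/-- Risk decomposition: `∫ (y - f)² = ∫ y² - 2∫ f·y + ∫ f²`. -/
lemma decomp_aux {α : Type*} [MeasurableSpace α] (μ : Measure (α × ℝ)) (f : α × ℝ → ℝ)
    (h1 : Integrable (fun z => f z * z.2) μ)
    (h2 : Integrable (fun z => (f z) ^ 2) μ)
    (h3 : Integrable (fun z => (z.2 - f z) ^ 2) μ) :
    ∫ z, (z.2 - f z) ^ 2 ∂μ
      = (∫ z, (z.2) ^ 2 ∂μ) - 2 * (∫ z, f z * z.2 ∂μ) + ∫ z, (f z) ^ 2 ∂μ := by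
  have h4 : (fun z : α × ℝ => (z.2) ^ 2)
      = fun z => ((z.2 - f z) ^ 2 + 2 * (f z * z.2)) - (f z) ^ 2 := by
    funext z; ring
  have h5 : Integrable (fun z : α × ℝ => 2 * (f z * z.2)) μ := h1.const_mul 2
  have h6 : Integrable (fun z : α × ℝ => (z.2 - f z) ^ 2 + 2 * (f z * z.2)) μ := h3.add h5
  rw [h4, integral_sub h6 h2, integral_add h3 h5, integral_const_mul]
  ring

/-- Sum decomposition: `Σ (y - c)² = Σ y² - 2 Σ c·y + Σ c²`. -/
lemma sum_decomp_aux {m : ℕ} (Y c : Fin m → ℝ) :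
    (∑ i, (Y i - c i) ^ 2 : ℝ)
      = ∑ i, (Y i) ^ 2 - 2 * (∑ i, c i * Y i) + ∑ i, (c i) ^ 2 := by
  rw [Finset.mul_sum, ← Finset.sum_sub_distrib, ← Finset.sum_add_distrib]
  exact Finset.sum_congr rfl fun i _ => by ring

/-- domain generalization of empirical FAIRM. Under the uniform-deviation
hypothesis, the empirical diversity condition and `I* ≠ ∅`, every empirical FAIRM
solution is within `4ρ₁ + 2ρ₂` of the full-information FAIRM risk in every environment. -/
theorem stmt13 {p q : ℕ} {E : Type} [Fintype E] [Nonempty E]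
    (Etr : Finset E) (hEtr : Etr.Nonempty)
    (P : E → Measure ((Fin p → ℝ) × ℝ)) [∀ e, IsProbabilityMeasure (P e)]
    (FΦ : Set ((Fin p → ℝ) → (Fin q → ℝ))) (Fw : Set ((Fin q → ℝ) → ℝ))
    (hreg : Regular P FΦ Fw)
    (αs : E → ℝ) (hαs : ∀ e, 0 < αs e) (hαssum : ∑ e : E, αs e = 1)
    (n : E → ℕ) (hn : ∀ e ∈ Etr, 0 < n e)
    (X : (e : E) → Fin (n e) → (Fin p → ℝ)) (Y : (e : E) → Fin (n e) → ℝ)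
    (ρ1 ρ2 : ℝ) (hρ1 : 0 < ρ1) (hρ2 : 0 < ρ2)
    (hdev : UnifDev P Etr FΦ Fw n X Y ρ1 ρ2)
    (hdiv : EmpDiv P Etr FΦ Fw ρ1 ρ2)
    (hne : (InvSet P FΦ Fw).Nonempty)
    (what : (Fin q → ℝ) → ℝ) (Φhat : (Fin p → ℝ) → (Fin q → ℝ))
    (hhat : IsEmpFairmSol Etr FΦ Fw n X Y ρ1 ρ2 what Φhat)
    (wstar : (Fin q → ℝ) → ℝ) (Φstar : (Fin p → ℝ) → (Fin q → ℝ))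
    (hstar : IsFullSol P FΦ Fw αs wstar Φstar) :
    ∀ e : E,
      risk P (fun x => what (Φhat x)) e - risk P (fun x => wstar (Φstar x)) e ≤
        4 * ρ1 + 2 * ρ2 := by
  obtain ⟨hwhatF, ⟨hΦhatF, hfeas⟩, hoptemp⟩ := hhat
  obtain ⟨hwstarF, ⟨hΦstarF, hinvstar⟩, -⟩ := hstar
  obtain ⟨hmeasΦ, hmeasw, hY2, hX2, hint⟩ := hreg
  -- Step 1: Φhat is invariant
  have hΦhatInv : Φhat ∈ InvSet P FΦ Fw := by
    by_contra hnot
    obtain ⟨u, hu, e, he, e', he', hcase⟩ := hdiv Φhat hΦhatF hnot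
    have hd := hdev u hu Φhat hΦhatF e he
    have hd' := hdev u hu Φhat hΦhatF e' he'
    have hf := hfeas u hu e he e' he'
    rcases hcase with h | h
    · have h1 := abs_le.mp hd.1
      have h2 := abs_le.mp hd'.1
      have h3 := abs_le.mp hf.1
      have h4 : |covT P Φhat u e - covT P Φhat u e'| ≤ 2 * ρ1 :=
        abs_le.mpr ⟨by linarith, by linarith⟩
      linarith
    · have h1 := abs_le.mp hd.2
      have h2 := abs_le.mp hd'.2
      have h3 := abs_le.mp hf.2
      have h4 : |sqT P Φhat u e - sqT P Φhat u e'| ≤ 2 * ρ2 :=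
        abs_le.mpr ⟨by linarith, by linarith⟩
      linarith
  -- Step 2: Φstar is empirically feasible
  have hΦstarFeas : Φstar ∈ EmpFeas Etr FΦ Fw n X Y ρ1 ρ2 := by
    refine ⟨hΦstarF, fun u hu e he e' he' => ?_⟩
    have hd := hdev u hu Φstar hΦstarF e he
    have hd' := hdev u hu Φstar hΦstarF e' he'
    have hinv := hinvstar u hu e e'
    have h1 := abs_le.mp hd.1
    have h2 := abs_le.mp hd'.1
    have h3 := abs_le.mp hd.2
    have h4 := abs_le.mp hd'.2
    exact ⟨abs_le.mpr ⟨by linarith [hinv.1], by linarith [hinv.1]⟩,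
      abs_le.mpr ⟨by linarith [hinv.2], by linarith [hinv.2]⟩⟩
  -- Step 3: population risk difference formula
  have hriskdiff : ∀ e : E,
      risk P (fun x => what (Φhat x)) e - risk P (fun x => wstar (Φstar x)) e
        = (-2 * covT P Φhat what e + sqT P Φhat what e)
          - (-2 * covT P Φstar wstar e + sqT P Φstar wstar e) := by
    intro e
    obtain ⟨i1, i2, i3⟩ := hint Φhat hΦhatF what hwhatF e
    obtain ⟨j1, j2, j3⟩ := hint Φstar hΦstarF wstar hwstarF e
    unfold risk covT sqT
    rw [decomp_aux (P e) (fun z => what (Φhat z.1)) i1 i2 i3,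
      decomp_aux (P e) (fun z => wstar (Φstar z.1)) j1 j2 j3]
    ring
  -- Step 4: empirical per-environment identity
  have hAe : ∀ e ∈ Etr,
      (∑ i, (Y e i - what (Φhat (X e i))) ^ 2 : ℝ)
        - ∑ i, (Y e i - wstar (Φstar (X e i))) ^ 2
      = (n e : ℝ) * ((-2 * empCov n X Y Φhat what e + empSq n X Φhat what e)
          - (-2 * empCov n X Y Φstar wstar e + empSq n X Φstar wstar e)) := by
    intro e he
    have hne : (n e : ℝ) ≠ 0 := Nat.cast_ne_zero.mpr (hn e he).ne'
    rw [sum_decomp_aux (Y e) (fun i => what (Φhat (X e i))),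
      sum_decomp_aux (Y e) (fun i => wstar (Φstar (X e i)))]
    simp only [empCov, empSq]
    field_simp
    ring
  -- Step 5: optimality of the empirical solution
  have hopt := hoptemp wstar hwstarF Φstar hΦstarFeas
  have hsum : ∑ e ∈ Etr, (n e : ℝ) * ((-2 * empCov n X Y Φhat what e + empSq n X Φhat what e)
      - (-2 * empCov n X Y Φstar wstar e + empSq n X Φstar wstar e)) ≤ 0 := by
    calc ∑ e ∈ Etr, (n e : ℝ) * ((-2 * empCov n X Y Φhat what e + empSq n X Φhat what e)
          - (-2 * empCov n X Y Φstar wstar e + empSq n X Φstar wstar e))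
        = ∑ e ∈ Etr, ((∑ i, (Y e i - what (Φhat (X e i))) ^ 2 : ℝ)
            - ∑ i, (Y e i - wstar (Φstar (X e i))) ^ 2) :=
          Finset.sum_congr rfl fun e he => (hAe e he).symm
      _ = (∑ e ∈ Etr, ∑ i, (Y e i - what (Φhat (X e i))) ^ 2)
            - ∑ e ∈ Etr, ∑ i, (Y e i - wstar (Φstar (X e i))) ^ 2 :=
          Finset.sum_sub_distrib _ _
      _ ≤ 0 := sub_nonpos.mpr hopt
  -- Step 6: conclude
  intro e
  rw [hriskdiff e]
  have hNpos : 0 < ∑ e' ∈ Etr, (n e' : ℝ) :=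
    Finset.sum_pos (fun e' he' => by exact_mod_cast hn e' he') hEtr
  set D : ℝ := (-2 * covT P Φhat what e + sqT P Φhat what e)
      - (-2 * covT P Φstar wstar e + sqT P Φstar wstar e) with hD
  have hbound : ∀ e' ∈ Etr, (n e' : ℝ) * D
      ≤ (n e' : ℝ) * ((-2 * empCov n X Y Φhat what e' + empSq n X Φhat what e')
          - (-2 * empCov n X Y Φstar wstar e' + empSq n X Φstar wstar e'))
        + (n e' : ℝ) * (2 * ρ1 + ρ2) := by
    intro e' he'
    have hdh := hdev what hwhatF Φhat hΦhatF e' he'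
    have hds := hdev wstar hwstarF Φstar hΦstarF e' he'
    have hch := (hΦhatInv.2 what hwhatF e e').1
    have hsh := (hΦhatInv.2 what hwhatF e e').2
    have hcs := (hinvstar wstar hwstarF e e').1
    have hss := (hinvstar wstar hwstarF e e').2
    have h1 := abs_le.mp hdh.1
    have h2 := abs_le.mp hdh.2
    have h3 := abs_le.mp hds.1
    have h4 := abs_le.mp hds.2
    have hn' : (0 : ℝ) ≤ (n e' : ℝ) := Nat.cast_nonneg _
    have hDle : D ≤ ((-2 * empCov n X Y Φhat what e' + empSq n X Φhat what e')
        - (-2 * empCov n X Y Φstar wstar e' + empSq n X Φstar wstar e'))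
        + (2 * ρ1 + ρ2) := by
      rw [hD]; linarith
    have := mul_le_mul_of_nonneg_left hDle hn'
    rw [mul_add] at this
    exact this
  have hsum2 : (∑ e' ∈ Etr, (n e' : ℝ)) * D
      ≤ (∑ e' ∈ Etr, (n e' : ℝ) * ((-2 * empCov n X Y Φhat what e' + empSq n X Φhat what e')
          - (-2 * empCov n X Y Φstar wstar e' + empSq n X Φstar wstar e')))
        + (∑ e' ∈ Etr, (n e' : ℝ)) * (2 * ρ1 + ρ2) := by
    rw [Finset.sum_mul, Finset.sum_mul, ← Finset.sum_add_distrib]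
    exact Finset.sum_le_sum hbound
  have hfin : (∑ e' ∈ Etr, (n e' : ℝ)) * D ≤ (∑ e' ∈ Etr, (n e' : ℝ)) * (2 * ρ1 + ρ2) := by
    linarith
  have hDle : D ≤ 2 * ρ1 + ρ2 := (mul_le_mul_iff_right₀ hNpos).mp hfin
  linarith
end
end

section
/- Assume the uniform-deviation hypothesis, the empirical diversity condition, I* ≠ ∅, and conditional-mean realizability. Then for every empirical FAIRM solution (ŵ, Φ̂): max_{e∈E} E[|E[y^e | σ(ŵ(Φ̂(x^e)))] − ŵ(Φ̂(x^e))|] ≤ √(4ρ_1 + 2ρ_2); that is, the multi-calibration error of the empirical FAIRM prediction rule is at most √(4ρ_1 + 2ρ_2) in every environment. -/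
open MeasureTheory

noncomputable section

lemma integrable_mul_of_memL2 {α : Type*} [MeasurableSpace α] {μ : Measure α} {f g : α → ℝ}
    (hf : MemLp f 2 μ) (hg : MemLp g 2 μ) : Integrable (fun x => f x * g x) μ := by
  have h1 : Integrable (fun x => (f x + g x) ^ 2) μ :=
    (memLp_two_iff_integrable_sq (hf.1.add hg.1)).mp (hf.add hg)
  have h2 : Integrable (fun x => f x ^ 2) μ := (memLp_two_iff_integrable_sq hf.1).mp hf
  have h3 : Integrable (fun x => g x ^ 2) μ := (memLp_two_iff_integrable_sq hg.1).mp hg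
  have : (fun x => f x * g x) = fun x => ((f x + g x) ^ 2 - f x ^ 2 - g x ^ 2) / 2 := by
    funext x; ring
  rw [this]; exact ((h1.sub h2).sub h3).div_const 2

lemma integral_abs_le_sqrt_sq {α : Type*} [MeasurableSpace α] {μ : Measure α}
    [IsProbabilityMeasure μ] {f : α → ℝ} (hf : MemLp f 2 μ) :
    ∫ x, |f x| ∂μ ≤ Real.sqrt (∫ x, f x ^ 2 ∂μ) := by
  have h2 : (ENNReal.ofReal (2 : ℝ)) = 2 := by norm_num
  have hpq : (2 : ℝ).HolderConjugate 2 := Real.holderConjugate_iff.mpr ⟨one_lt_two, by norm_num⟩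
  have habs : MemLp (fun x => |f x|) (ENNReal.ofReal (2 : ℝ)) μ := by
    rw [h2]; simpa [Real.norm_eq_abs] using hf.norm
  have hone : MemLp (fun _ : α => (1 : ℝ)) (ENNReal.ofReal (2 : ℝ)) μ := by
    rw [h2]; exact memLp_const 1
  have H := integral_mul_le_Lp_mul_Lq_of_nonneg hpq
    (Filter.Eventually.of_forall fun x => abs_nonneg (f x))
    (Filter.Eventually.of_forall fun _ => zero_le_one) habs hone
  simp only [mul_one] at H
  have e1 : ∫ x, |f x| ^ (2 : ℝ) ∂μ = ∫ x, f x ^ 2 ∂μ := by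
    refine integral_congr_ae (Filter.Eventually.of_forall fun x => ?_)
    have hx : |f x| ^ (2 : ℝ) = |f x| ^ (2 : ℕ) := by
      rw [← Real.rpow_natCast]; norm_num
    simp [hx, sq_abs]
  have e2 : ∫ _x : α, (1 : ℝ) ^ (2 : ℝ) ∂μ = 1 := by simp
  rw [e1, e2, Real.one_rpow, mul_one, ← Real.sqrt_eq_rpow] at H
  exact H

/-- multi-calibration of empirical FAIRM. Under the uniform-deviation
hypothesis, the empirical diversity condition, `I* ≠ ∅` and conditional-mean
realizability, every empirical FAIRM solution has multi-calibration error at most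
`√(4ρ₁ + 2ρ₂)` in every environment. -/
theorem stmt14 {p q : ℕ} {E : Type} [Fintype E] [Nonempty E]
    (Etr : Finset E) (hEtr : Etr.Nonempty)
    (P : E → Measure ((Fin p → ℝ) × ℝ)) [∀ e, IsProbabilityMeasure (P e)]
    (FΦ : Set ((Fin p → ℝ) → (Fin q → ℝ))) (Fw : Set ((Fin q → ℝ) → ℝ))
    (hreg : Regular P FΦ Fw)
    (n : E → ℕ) (hn : ∀ e ∈ Etr, 0 < n e)
    (X : (e : E) → Fin (n e) → (Fin p → ℝ)) (Y : (e : E) → Fin (n e) → ℝ)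
    (ρ1 ρ2 : ℝ) (hρ1 : 0 < ρ1) (hρ2 : 0 < ρ2)
    (hdev : UnifDev P Etr FΦ Fw n X Y ρ1 ρ2)
    (hdiv : EmpDiv P Etr FΦ Fw ρ1 ρ2)
    (hne : (InvSet P FΦ Fw).Nonempty)
    (hcmr : CMR P FΦ Fw)
    (what : (Fin q → ℝ) → ℝ) (Φhat : (Fin p → ℝ) → (Fin q → ℝ))
    (hhat : IsEmpFairmSol Etr FΦ Fw n X Y ρ1 ρ2 what Φhat) :
    ∀ e : E,
      ∫ z, |((P e)[(fun z' : (Fin p → ℝ) × ℝ => z'.2) |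
            sigmaGen (fun z' => what (Φhat z'.1))]) z - what (Φhat z.1)| ∂(P e) ≤
        Real.sqrt (4 * ρ1 + 2 * ρ2) := by
  classical
  obtain ⟨hwhat, hΦfeas, hmin⟩ := hhat
  obtain ⟨hΦF, hfeas⟩ := hΦfeas
  obtain ⟨hΦmeasA, hwmeasA, hyL2, _hxL2, hints⟩ := hreg
  -- Step A: Φhat is invariant
  have hΦinv : Φhat ∈ InvSet P FΦ Fw := by
    by_contra hnot
    obtain ⟨u, hu, e, he, e', he', hgap⟩ := hdiv Φhat hΦF hnot
    have h1 := hdev u hu Φhat hΦF e he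
    have h2 := hdev u hu Φhat hΦF e' he'
    have h3 := hfeas u hu e he e' he'
    have t1 : |covT P Φhat u e - covT P Φhat u e'| ≤
        |covT P Φhat u e - empCov n X Y Φhat u e| +
        (|empCov n X Y Φhat u e - empCov n X Y Φhat u e'| +
          |empCov n X Y Φhat u e' - covT P Φhat u e'|) :=
      (abs_sub_le _ (empCov n X Y Φhat u e) _).trans
        (by gcongr; exact abs_sub_le _ (empCov n X Y Φhat u e') _)
    have t2 : |sqT P Φhat u e - sqT P Φhat u e'| ≤
        |sqT P Φhat u e - empSq n X Φhat u e| +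
        (|empSq n X Φhat u e - empSq n X Φhat u e'| +
          |empSq n X Φhat u e' - sqT P Φhat u e'|) :=
      (abs_sub_le _ (empSq n X Φhat u e) _).trans
        (by gcongr; exact abs_sub_le _ (empSq n X Φhat u e') _)
    rcases hgap with hg | hg
    · have h1c : |covT P Φhat u e - empCov n X Y Φhat u e| ≤ ρ1 / 2 := by
        rw [abs_sub_comm]; exact h1.1
      have h2c := h2.1
      have := h3.1; linarith
    · have h1c : |sqT P Φhat u e - empSq n X Φhat u e| ≤ ρ2 / 2 := by
        rw [abs_sub_comm]; exact h1.2
      have h2c := h2.2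
      have := h3.2; linarith
  -- Step B: conditional-mean realizability
  obtain ⟨wΦ, hwΦ, hcond⟩ := hcmr Φhat hΦinv
  -- measurability facts
  have hΦm : Measurable Φhat := hΦmeasA Φhat hΦF
  have hwm : Measurable what := hwmeasA what hwhat
  have hwΦm : Measurable wΦ := hwmeasA wΦ hwΦ
  have hZ : Measurable (fun z : (Fin p → ℝ) × ℝ => Φhat z.1) := hΦm.comp measurable_fst
  -- Step C/D/E: bound the invariant excess "T" difference via the empirical minimizer
  -- T u e := 2 * covT - sqT
  have hmin' := hmin wΦ hwΦ Φhat ⟨hΦF, hfeas⟩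
  obtain ⟨e0, he0, hle0⟩ := Finset.exists_le_of_sum_le hEtr hmin'
  have hN : (0 : ℝ) < (n e0 : ℝ) := by exact_mod_cast hn e0 he0
  have hsum : ∀ u : (Fin q → ℝ) → ℝ,
      ∑ i, (Y e0 i - u (Φhat (X e0 i))) ^ 2 =
        (∑ i, (Y e0 i) ^ 2) - (n e0 : ℝ) *
          (2 * empCov n X Y Φhat u e0 - empSq n X Φhat u e0) := by
    intro u
    have hid : ∀ i, (Y e0 i - u (Φhat (X e0 i))) ^ 2 =
        (Y e0 i) ^ 2 - 2 * (u (Φhat (X e0 i)) * Y e0 i) + (u (Φhat (X e0 i))) ^ 2 :=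
      fun i => by ring
    simp_rw [hid]
    rw [Finset.sum_add_distrib, Finset.sum_sub_distrib, ← Finset.mul_sum]
    unfold empCov empSq
    field_simp
    ring
  have hEmpIneq : 2 * empCov n X Y Φhat wΦ e0 - empSq n X Φhat wΦ e0 ≤
      2 * empCov n X Y Φhat what e0 - empSq n X Φhat what e0 := by
    rw [hsum what, hsum wΦ] at hle0
    nlinarith
  have hd1 := hdev what hwhat Φhat hΦF e0 he0
  have hd2 := hdev wΦ hwΦ Φhat hΦF e0 he0
  obtain ⟨hd11, hd12⟩ := hd1
  obtain ⟨hd21, hd22⟩ := hd2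
  rw [abs_le] at hd11 hd12 hd21 hd22
  have hT0 : (2 * covT P Φhat wΦ e0 - sqT P Φhat wΦ e0) -
      (2 * covT P Φhat what e0 - sqT P Φhat what e0) ≤ 2 * ρ1 + ρ2 := by
    obtain ⟨a1, a2⟩ := hd11; obtain ⟨b1, b2⟩ := hd12
    obtain ⟨c1, c2⟩ := hd21; obtain ⟨d1, d2⟩ := hd22
    linarith
  -- Step F: fix an environment e and transfer by invariance
  intro e
  have hcw : covT P Φhat wΦ e = covT P Φhat wΦ e0 := (hΦinv.2 wΦ hwΦ e e0).1
  have hsw : sqT P Φhat wΦ e = sqT P Φhat wΦ e0 := (hΦinv.2 wΦ hwΦ e e0).2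
  have hch : covT P Φhat what e = covT P Φhat what e0 := (hΦinv.2 what hwhat e e0).1
  have hsh : sqT P Φhat what e = sqT P Φhat what e0 := (hΦinv.2 what hwhat e e0).2
  have hT : (2 * covT P Φhat wΦ e - sqT P Φhat wΦ e) -
      (2 * covT P Φhat what e - sqT P Φhat what e) ≤ 2 * ρ1 + ρ2 := by
    rw [hcw, hsw, hch, hsh]; exact hT0
  -- abbreviations
  set μ := P e with hμ
  set a : (Fin p → ℝ) × ℝ → ℝ := fun z => wΦ (Φhat z.1) with ha
  set b : (Fin p → ℝ) × ℝ → ℝ := fun z => what (Φhat z.1) with hb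
  have ham : Measurable a := hwΦm.comp hZ
  have hbm : Measurable b := hwm.comp hZ
  -- L² facts
  have hy2 : MemLp (fun z : (Fin p → ℝ) × ℝ => z.2) 2 μ := hyL2 e
  obtain ⟨hcw1, hsw1, hrw1⟩ := hints Φhat hΦF wΦ hwΦ e
  obtain ⟨hch1, hsh1, hrh1⟩ := hints Φhat hΦF what hwhat e
  have ha2 : MemLp a 2 μ := (memLp_two_iff_integrable_sq ham.aestronglyMeasurable).mpr hsw1
  have hb2 : MemLp b 2 μ := (memLp_two_iff_integrable_sq hbm.aestronglyMeasurable).mpr hsh1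
  have hab2 : MemLp (fun z => a z - b z) 2 μ := ha2.sub hb2
  have hya2 : MemLp (fun z : (Fin p → ℝ) × ℝ => z.2 - a z) 2 μ := hy2.sub ha2
  have hyInt : Integrable (fun z : (Fin p → ℝ) × ℝ => z.2) μ := hy2.integrable one_le_two
  have haInt : Integrable a μ := ha2.integrable one_le_two
  have hbInt : Integrable b μ := hb2.integrable one_le_two
  have hy2int : Integrable (fun z : (Fin p → ℝ) × ℝ => z.2 ^ 2) μ :=
    (memLp_two_iff_integrable_sq hy2.1).mp hy2
  -- risk expansion
  have hexp : ∀ u : (Fin q → ℝ) → ℝ,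
      Integrable (fun z : (Fin p → ℝ) × ℝ => u (Φhat z.1) * z.2) μ →
      Integrable (fun z : (Fin p → ℝ) × ℝ => (u (Φhat z.1)) ^ 2) μ →
      ∫ z, (z.2 - u (Φhat z.1)) ^ 2 ∂μ =
        (∫ z, z.2 ^ 2 ∂μ) - (2 * covT P Φhat u e - sqT P Φhat u e) := by
    intro u hc hs
    have hid : (fun z : (Fin p → ℝ) × ℝ => (z.2 - u (Φhat z.1)) ^ 2) =
        fun z => (z.2 ^ 2 - 2 * (u (Φhat z.1) * z.2)) + (u (Φhat z.1)) ^ 2 := by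
      funext z; ring
    have hfg : Integrable (fun z : (Fin p → ℝ) × ℝ =>
        z.2 ^ 2 - 2 * (u (Φhat z.1) * z.2)) μ := hy2int.sub (hc.const_mul 2)
    rw [hid, integral_add hfg hs, integral_sub hy2int (hc.const_mul 2), integral_const_mul]
    unfold covT sqT
    rw [hμ]
    ring
  -- the sub-σ-algebras
  have hm' : (sigmaGen (fun z : (Fin p → ℝ) × ℝ => Φhat z.1)) ≤ Prod.instMeasurableSpace := hZ.comap_le
  have hZm' : @Measurable _ _ (sigmaGen (fun z : (Fin p → ℝ) × ℝ => Φhat z.1)) _ (fun z : (Fin p → ℝ) × ℝ => Φhat z.1) :=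
    fun s hs => ⟨s, hs, rfl⟩
  have ha_sm : StronglyMeasurable[(sigmaGen (fun z : (Fin p → ℝ) × ℝ => Φhat z.1))] a := (hwΦm.comp hZm').stronglyMeasurable
  have hb_sm : StronglyMeasurable[(sigmaGen (fun z : (Fin p → ℝ) × ℝ => Φhat z.1))] b := (hwm.comp hZm').stronglyMeasurable
  -- cross term is zero
  have hzero : μ[fun z : (Fin p → ℝ) × ℝ => z.2 - a z|(sigmaGen (fun z : (Fin p → ℝ) × ℝ => Φhat z.1))] =ᵐ[μ] 0 := by
    have hma : μ[a|(sigmaGen (fun z : (Fin p → ℝ) × ℝ => Φhat z.1))] = a := condExp_of_stronglyMeasurable (μ := μ) hm' ha_sm haInt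
    have hsub : μ[fun z : (Fin p → ℝ) × ℝ => z.2 - a z|(sigmaGen (fun z : (Fin p → ℝ) × ℝ => Φhat z.1))] =ᵐ[μ]
        μ[fun z : (Fin p → ℝ) × ℝ => z.2|(sigmaGen (fun z : (Fin p → ℝ) × ℝ => Φhat z.1))] - μ[a|(sigmaGen (fun z : (Fin p → ℝ) × ℝ => Φhat z.1))] := condExp_sub hyInt haInt _
    filter_upwards [hsub, hcond e] with z h1 h2
    rw [Pi.zero_apply, h1, Pi.sub_apply, h2, hma]
    simp
  have hprodInt : Integrable (fun z => (a z - b z) * (z.2 - a z)) μ :=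
    integrable_mul_of_memL2 hab2 hya2
  have hyaInt : Integrable (fun z : (Fin p → ℝ) × ℝ => z.2 - a z) μ := hyInt.sub haInt
  have hcross : ∫ z, (a z - b z) * (z.2 - a z) ∂μ = 0 := by
    have hmul := condExp_mul_of_stronglyMeasurable_left (μ := μ) (ha_sm.sub hb_sm)
      (by exact hprodInt) hyaInt
    have h0 : ((fun z => a z - b z) * μ[fun z : (Fin p → ℝ) × ℝ => z.2 - a z|(sigmaGen (fun z : (Fin p → ℝ) × ℝ => Φhat z.1))])
        =ᵐ[μ] 0 := by
      filter_upwards [hzero] with z hz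
      simp [hz]
    calc ∫ z, (a z - b z) * (z.2 - a z) ∂μ
        = ∫ z, (μ[(fun z => a z - b z) * (fun z : (Fin p → ℝ) × ℝ => z.2 - a z)|(sigmaGen (fun z : (Fin p → ℝ) × ℝ => Φhat z.1))]) z ∂μ :=
          (integral_condExp hm').symm
      _ = ∫ z, (0 : ℝ) ∂μ := integral_congr_ae (hmul.trans h0)
      _ = 0 := integral_zero _ _
  -- Pythagoras
  have hSint : Integrable (fun z => (a z - b z) ^ 2) μ :=
    (memLp_two_iff_integrable_sq hab2.1).mp hab2
  have hPy : ∫ z, (a z - b z) ^ 2 ∂μ =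
      (∫ z, (z.2 - b z) ^ 2 ∂μ) - ∫ z, (z.2 - a z) ^ 2 ∂μ := by
    have hid : (fun z : (Fin p → ℝ) × ℝ => (z.2 - b z) ^ 2) =
        fun z => ((z.2 - a z) ^ 2 + 2 * ((a z - b z) * (z.2 - a z))) + (a z - b z) ^ 2 := by
      funext z; ring
    have hy2a : Integrable (fun z : (Fin p → ℝ) × ℝ => (z.2 - a z) ^ 2) μ :=
      (memLp_two_iff_integrable_sq hya2.1).mp hya2
    have hfg : Integrable (fun z : (Fin p → ℝ) × ℝ =>
        (z.2 - a z) ^ 2 + 2 * ((a z - b z) * (z.2 - a z))) μ :=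
      hy2a.add (hprodInt.const_mul 2)
    have h := congrArg (fun f => ∫ z, f z ∂μ) hid
    simp only at h
    rw [integral_add hfg hSint, integral_add hy2a (hprodInt.const_mul 2),
      integral_const_mul, hcross] at h
    rw [h]; ring
  -- combine: ∫ (a-b)² ≤ 2ρ1 + ρ2
  have hSbound : ∫ z, (a z - b z) ^ 2 ∂μ ≤ 2 * ρ1 + ρ2 := by
    rw [hPy, hexp what hch1 hsh1, hexp wΦ hcw1 hsw1]
    linarith
  -- the smaller σ-algebra
  have hm_le : (sigmaGen (fun z : (Fin p → ℝ) × ℝ => what (Φhat z.1))) ≤ (sigmaGen (fun z : (Fin p → ℝ) × ℝ => Φhat z.1)) := by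
    have hcomp : (sigmaGen (fun z : (Fin p → ℝ) × ℝ => what (Φhat z.1))) = MeasurableSpace.comap (fun z : (Fin p → ℝ) × ℝ => Φhat z.1)
        (MeasurableSpace.comap what inferInstance) := MeasurableSpace.comap_comp.symm
    rw [hcomp]
    exact MeasurableSpace.comap_mono hwm.comap_le
  have hm : (sigmaGen (fun z : (Fin p → ℝ) × ℝ => what (Φhat z.1))) ≤ Prod.instMeasurableSpace := hm_le.trans hm'
  have hb_smm : StronglyMeasurable[(sigmaGen (fun z : (Fin p → ℝ) × ℝ => what (Φhat z.1)))] b :=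
    (show @Measurable _ _ (sigmaGen (fun z : (Fin p → ℝ) × ℝ => what (Φhat z.1))) _ b from fun s hs => ⟨s, hs, rfl⟩).stronglyMeasurable
  have h4 : μ[b|(sigmaGen (fun z : (Fin p → ℝ) × ℝ => what (Φhat z.1)))] = b := condExp_of_stronglyMeasurable hm hb_smm hbInt
  have h1 : μ[fun z : (Fin p → ℝ) × ℝ => z.2|(sigmaGen (fun z : (Fin p → ℝ) × ℝ => what (Φhat z.1)))]
      =ᵐ[μ] μ[μ[fun z : (Fin p → ℝ) × ℝ => z.2|(sigmaGen (fun z : (Fin p → ℝ) × ℝ => Φhat z.1))]|(sigmaGen (fun z : (Fin p → ℝ) × ℝ => what (Φhat z.1)))] :=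
    (condExp_condExp_of_le hm_le hm').symm
  have h2 : μ[μ[fun z : (Fin p → ℝ) × ℝ => z.2|(sigmaGen (fun z : (Fin p → ℝ) × ℝ => Φhat z.1))]|(sigmaGen (fun z : (Fin p → ℝ) × ℝ => what (Φhat z.1)))] =ᵐ[μ] μ[a|(sigmaGen (fun z : (Fin p → ℝ) × ℝ => what (Φhat z.1)))] :=
    condExp_congr_ae (hcond e)
  have h3 := condExp_sub (m := (sigmaGen (fun z : (Fin p → ℝ) × ℝ => what (Φhat z.1)))) haInt hbInt
  have hkey : (fun z => |(μ[fun z' : (Fin p → ℝ) × ℝ => z'.2|(sigmaGen (fun z : (Fin p → ℝ) × ℝ => what (Φhat z.1)))]) z - b z|)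
      =ᵐ[μ] fun z => |(μ[a - b|(sigmaGen (fun z : (Fin p → ℝ) × ℝ => what (Φhat z.1)))]) z| := by
    filter_upwards [h1, h2, h3] with z e1 e2 e3
    simp only [Pi.sub_apply] at e3
    rw [e1, e2, e3, h4]
  calc ∫ z, |(μ[fun z' : (Fin p → ℝ) × ℝ => z'.2|(sigmaGen (fun z : (Fin p → ℝ) × ℝ => what (Φhat z.1)))]) z - b z| ∂μ
      = ∫ z, |(μ[a - b|(sigmaGen (fun z : (Fin p → ℝ) × ℝ => what (Φhat z.1)))]) z| ∂μ := integral_congr_ae hkey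
    _ ≤ ∫ z, |(a - b) z| ∂μ := integral_abs_condExp_le _
    _ = ∫ z, |a z - b z| ∂μ := by simp [Pi.sub_apply]
    _ ≤ Real.sqrt (∫ z, (a z - b z) ^ 2 ∂μ) := integral_abs_le_sqrt_sq hab2
    _ ≤ Real.sqrt (4 * ρ1 + 2 * ρ2) := by
        apply Real.sqrt_le_sqrt
        linarith
end
end
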